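/- arXiv:2510.01301 — 7 statements merged into one kernel-verified Lean document; each statement's English description precedes it below -/
import Mathlib

section
/- Fix p ∈ (0,1) and let A be a Bernoulli(p) random subset of ℕ. Then with probability 1 the following holds: for every integer L ≥ 1 there exist natural numbers x_1 < x_2 < ⋯ < x_L such that FS(x_1,…,x_L) ⊆ A. That is, almost surely A contains finite sumsets of every finite length. -/
open MeasureTheory ProbabilityTheory

/-- The finite sumset of `x : Fin L → ℕ`: all sums over nonempty subsets of indices. -/
def FS {L : ℕ} (x : Fin L → ℕ) : Set ℕ :=
  {s | ∃ F : Finset (Fin L), F.Nonempty ∧ s = ∑ i ∈ F, x i}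

lemma sum_pow_two_fin (L : ℕ) : ∑ i : Fin L, 2 ^ (i : ℕ) = 2 ^ L - 1 := by
  rw [Fin.sum_univ_eq_sum_range]
  induction L with
  | zero => simp
  | succ n ih =>
    rw [Finset.sum_range_succ, ih, pow_succ]
    have h1 : 1 ≤ 2 ^ n := Nat.one_le_two_pow
    omega

/-- **Random Finite Sumsets.** For a Bernoulli(`p`) random subset `A(ω) = {n | ε n ω = true}`
of `ℕ`, almost surely, for every `L ≥ 1` there are `x₁ < ⋯ < x_L` with
`FS(x₁,…,x_L) ⊆ A(ω)`. -/
theorem random_finite_sumsets {Ω : Type*} [MeasurableSpace Ω]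
    (μ : Measure Ω) [IsProbabilityMeasure μ]
    (p : ℝ) (hp : p ∈ Set.Ioo (0 : ℝ) 1)
    (ε : ℕ → Ω → Bool) (hmeas : ∀ n, Measurable (ε n))
    (hindep : iIndepFun ε μ)
    (hbern : ∀ n, μ {ω | ε n ω = true} = ENNReal.ofReal p) :
    ∀ᵐ ω ∂μ, ∀ L : ℕ, 1 ≤ L →
      ∃ x : Fin L → ℕ, StrictMono x ∧ FS x ⊆ {n | ε n ω = true} := by
  rw [MeasureTheory.ae_all_iff]
  intro L
  by_cases hL : 1 ≤ L
  swap
  · filter_upwards with ω h; exact absurd h hL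
  suffices h : ∀ᵐ ω ∂μ,
      ∃ x : Fin L → ℕ, StrictMono x ∧ FS x ⊆ {n | ε n ω = true} by
    filter_upwards [h] with ω hω _; exact hω
  -- setup
  set M : ℕ := 2 ^ L with hM
  have hM2 : 2 ≤ M := by
    calc 2 = 2 ^ 1 := (pow_one 2).symm
    _ ≤ 2 ^ L := Nat.pow_le_pow_right (by norm_num) hL
  set T : ℕ → Set Ω := fun n => {ω | ε n ω = true} with hT
  have hTmeas : ∀ n, MeasurableSet (T n) := fun n =>
    (hmeas n) (measurableSet_singleton true)
  have hTcomap : ∀ n, MeasurableSet[(inferInstance : MeasurableSpace Bool).comap (ε n)] (T n) :=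
    fun n => ⟨{true}, trivial, rfl⟩
  set B : ℕ → Finset ℕ := fun j => (Finset.Icc 1 (M - 1)).image (fun m => M ^ (j + 1) * m)
    with hB
  -- bounds on elements of blocks
  have hBmem : ∀ j n, n ∈ B j → M ^ (j + 1) ≤ n ∧ n < M ^ (j + 2) := by
    intro j n hn
    simp only [hB, Finset.mem_image, Finset.mem_Icc] at hn
    obtain ⟨m, ⟨hm1, hm2⟩, rfl⟩ := hn
    constructor
    · exact Nat.le_mul_of_pos_right _ hm1
    · calc M ^ (j + 1) * m ≤ M ^ (j + 1) * (M - 1) := Nat.mul_le_mul_left _ hm2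
      _ < M ^ (j + 1) * M := (Nat.mul_lt_mul_left (Nat.pow_pos (by omega : 0 < M))).mpr (by omega)
      _ = M ^ (j + 2) := by ring
  -- disjointness of blocks
  have hBdisj : ∀ i j : ℕ, i ≠ j → Disjoint (B i) (B j) := by
    have key : ∀ i j : ℕ, i < j → Disjoint (B i) (B j) := by
      intro i j hij
      rw [Finset.disjoint_left]
      intro n hni hnj
      have h1 := (hBmem i n hni).2
      have h2 := (hBmem j n hnj).1
      have : M ^ (i + 2) ≤ M ^ (j + 1) := Nat.pow_le_pow_right (by omega) (by omega)
      omega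
    intro i j hij
    rcases lt_or_gt_of_ne hij with h | h
    · exact key i j h
    · exact (key j i h).symm
  -- events
  set s : ℕ → Set Ω := fun j => ⋂ n ∈ B j, T n with hs
  have hsmeas : ∀ j, MeasurableSet (s j) := fun j =>
    Finset.measurableSet_biInter _ (fun n _ => hTmeas n)
  set q : ENNReal := (ENNReal.ofReal p) ^ (M - 1) with hq
  have hcard : ∀ j, (B j).card = M - 1 := by
    intro j
    rw [hB]
    rw [Finset.card_image_of_injective _ (mul_right_injective₀
      (pow_ne_zero _ (by omega : M ≠ 0)))]
    simp
  have hmeasS : ∀ j, μ (s j) = q := by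
    intro j
    rw [hs]
    rw [hindep.meas_biInter (fun n _ => hTcomap n)]
    have : ∀ n ∈ B j, μ (T n) = ENNReal.ofReal p := fun n _ => hbern n
    rw [Finset.prod_congr rfl this, Finset.prod_const, hcard j, hq]
  -- independence of events
  have hiIndep : iIndepSet s μ := by
    rw [ProbabilityTheory.iIndepSet_iff_meas_biInter hsmeas]
    intro t
    classical
    have h1 : (⋂ j ∈ t, s j) = ⋂ n ∈ t.biUnion B, T n := by
      rw [Finset.set_biInter_biUnion]
    rw [h1, hindep.meas_biInter (fun n _ => hTcomap n),
      Finset.prod_biUnion (fun i _ j _ hij => hBdisj i j hij)]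
    refine Finset.prod_congr rfl (fun j _ => ?_)
    rw [hs]
    exact (hindep.meas_biInter (fun n _ => hTcomap n)).symm
  -- sum of measures diverges
  have hq0 : q ≠ 0 := by
    apply pow_ne_zero
    simp only [ne_eq, ENNReal.ofReal_eq_zero, not_le]
    exact hp.1
  have htsum : (∑' j, μ (s j)) = ⊤ := by
    simp only [hmeasS]
    exact ENNReal.tsum_const_eq_top_of_ne_zero hq0
  -- second Borel-Cantelli
  have hone := ProbabilityTheory.measure_limsup_eq_one hsmeas hiIndep htsum
  have hae : ∀ᵐ ω ∂μ, ω ∈ Filter.limsup s Filter.atTop := by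
    rw [MeasureTheory.ae_iff]
    have hm : MeasurableSet (Filter.limsup s Filter.atTop) :=
      MeasurableSet.measurableSet_limsup hsmeas
    have : {ω | ¬ ω ∈ Filter.limsup s Filter.atTop} = (Filter.limsup s Filter.atTop)ᶜ := rfl
    rw [this, measure_compl hm (measure_ne_top _ _), hone, measure_univ, tsub_self]
  filter_upwards [hae] with ω hω
  rw [Filter.mem_limsup_iff_frequently_mem] at hω
  obtain ⟨j, hj⟩ := hω.exists
  refine ⟨fun i => 2 ^ (i : ℕ) * M ^ (j + 1), ?_, ?_⟩
  · intro a b hab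
    have : (2:ℕ) ^ (a : ℕ) < 2 ^ (b : ℕ) := Nat.pow_lt_pow_right (by norm_num) hab
    exact (Nat.mul_lt_mul_right (Nat.pow_pos (by omega : 0 < M))).mpr this
  · rintro n ⟨F, hF, rfl⟩
    have hsum : ∑ i ∈ F, 2 ^ (i : ℕ) * M ^ (j + 1) = M ^ (j + 1) * ∑ i ∈ F, 2 ^ (i : ℕ) := by
      rw [Finset.mul_sum]; exact Finset.sum_congr rfl (fun i _ => mul_comm _ _)
    set m : ℕ := ∑ i ∈ F, 2 ^ (i : ℕ) with hm
    have hm1 : 1 ≤ m := by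
      obtain ⟨i, hi⟩ := hF
      calc 1 ≤ 2 ^ (i : ℕ) := Nat.one_le_two_pow
      _ ≤ m := Finset.single_le_sum (f := fun k : Fin L => 2 ^ (k : ℕ)) (fun k _ => Nat.zero_le _) hi
    have hm2 : m ≤ M - 1 := by
      have : m ≤ ∑ i : Fin L, 2 ^ (i : ℕ) :=
        Finset.sum_le_sum_of_subset (Finset.subset_univ F)
      rw [sum_pow_two_fin] at this
      exact this
    have hnB : M ^ (j + 1) * m ∈ B j := by
      rw [hB]
      exact Finset.mem_image.2 ⟨m, Finset.mem_Icc.2 ⟨hm1, hm2⟩, rfl⟩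
    have : ω ∈ T (M ^ (j + 1) * m) := by
      rw [hs] at hj
      simp only [Set.mem_iInter] at hj
      exact hj _ hnB
    rw [Set.mem_setOf_eq] at this ⊢
    rw [hsum]
    exact this
end

section
/- Fix p ∈ (0,1) and let A be a Bernoulli(p) random subset of ℕ. Then with probability 1 the following holds: for every integer L ≥ 1 there exist natural numbers x_1 < x_2 < ⋯ < x_L such that FP(x_1,…,x_L) ⊆ A. That is, almost surely A contains finite product sets of every finite length. -/
open MeasureTheory ProbabilityTheory
open scoped ENNReal

lemma sum_range_two_pow (L : ℕ) : ∑ i ∈ Finset.range L, 2^i = 2^L - 1 := by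
  induction L with
  | zero => simp
  | succ n ih =>
    rw [Finset.sum_range_succ, ih]
    have := Nat.one_le_two_pow (n := n)
    rw [pow_succ]
    omega


/-- The finite product set of `x : Fin L → ℕ`: all products over nonempty subsets of indices. -/
def FP {L : ℕ} (x : Fin L → ℕ) : Set ℕ :=
  {s | ∃ F : Finset (Fin L), F.Nonempty ∧ s = ∏ i ∈ F, x i}

/-- **Random Finite Product Sets.** For a Bernoulli(`p`) random subset
`A(ω) = {n | ε n ω = true}` of `ℕ`, almost surely, for every `L ≥ 1` there are
`x₁ < ⋯ < x_L` with `FP(x₁,…,x_L) ⊆ A(ω)`. -/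
theorem random_finite_product_sets {Ω : Type*} [MeasurableSpace Ω]
    (μ : Measure Ω) [IsProbabilityMeasure μ]
    (p : ℝ) (hp : p ∈ Set.Ioo (0 : ℝ) 1)
    (ε : ℕ → Ω → Bool) (hmeas : ∀ n, Measurable (ε n))
    (hindep : iIndepFun ε μ)
    (hbern : ∀ n, μ {ω | ε n ω = true} = ENNReal.ofReal p) :
    ∀ᵐ ω ∂μ, ∀ L : ℕ, 1 ≤ L →
      ∃ x : Fin L → ℕ, StrictMono x ∧ FP x ⊆ {n | ε n ω = true} := by
  have hp0 : (ENNReal.ofReal p) ≠ 0 := (ENNReal.ofReal_pos.2 hp.1).ne'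
  have hp1 : (ENNReal.ofReal p) ≤ 1 := ENNReal.ofReal_le_one.2 hp.2.le
  set B : ℕ → Set Ω := fun n => {ω | ε n ω = true} with hB
  have hBmeas : ∀ n, MeasurableSet (B n) := fun n =>
    (hmeas n) (measurableSet_singleton true)
  have key : ∀ T : Finset ℕ, μ (⋂ n ∈ T, B n) = ENNReal.ofReal p ^ T.card := by
    intro T
    have h := hindep.meas_biInter (S := T) (s := B)
      (fun i _ => ⟨{true}, measurableSet_singleton true, rfl⟩)
    rw [h, Finset.prod_congr rfl (fun n _ => hbern n), Finset.prod_const]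
  suffices H : ∀ L : ℕ, 1 ≤ L → ∀ᵐ ω ∂μ,
      ∃ x : Fin L → ℕ, StrictMono x ∧ FP x ⊆ {n | ε n ω = true} by
    rw [ae_all_iff]
    intro L
    by_cases hL : 1 ≤ L
    · filter_upwards [H L hL] with ω h _ using h
    · filter_upwards with ω h; omega
  intro L hL
  set S : ℕ → Finset ℕ := fun k =>
    (Finset.Ico 1 (2^L)).image (fun m => 2^(2^(L*k) * m)) with hS
  have hdisj : ∀ j k : ℕ, j ≠ k → Disjoint (S j) (S k) := by
    have main : ∀ j k m m' : ℕ, j < k → 1 ≤ m → m < 2^L → 1 ≤ m' →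
        2^(2^(L*j) * m) ≠ 2^(2^(L*k) * m') := by
      intro j k m m' hjk hm1 hm2 hm'1 heq
      have h1 : 2^(L*j) * m = 2^(L*k) * m' :=
        Nat.pow_right_injective (le_refl 2) heq
      have h2 : 2^(L*j) * m < 2^(L*(j+1)) := by
        calc 2^(L*j) * m < 2^(L*j) * 2^L :=
              mul_lt_mul_of_pos_left hm2 (Nat.pow_pos (by norm_num))
          _ = 2^(L*(j+1)) := by rw [← pow_add]; ring_nf
      have h3 : 2^(L*(j+1)) ≤ 2^(L*k) := Nat.pow_le_pow_right (by norm_num)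
        (Nat.mul_le_mul_left L hjk)
      have h4 : 2^(L*k) ≤ 2^(L*k) * m' := Nat.le_mul_of_pos_right _ hm'1
      omega
    intro j k hjk
    rw [Finset.disjoint_left]
    rintro a ha hb
    simp only [hS, Finset.mem_image, Finset.mem_Ico] at ha hb
    obtain ⟨m, ⟨hm1, hm2⟩, rfl⟩ := ha
    obtain ⟨m', ⟨hm'1, hm'2⟩, heq⟩ := hb
    rcases hjk.lt_or_gt with h | h
    · exact main j k m m' h hm1 hm2 hm'1 heq.symm
    · exact main k j m' m h hm'1 hm'2 hm1 heq
  set E : ℕ → Set Ω := fun k => ⋂ n ∈ S k, B n with hE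
  have hEmeas : ∀ k, MeasurableSet (E k) := fun k =>
    MeasurableSet.biInter (Set.to_countable _) (fun n _ => hBmeas n)
  have hEmeasure : ∀ k, μ (E k) = ENNReal.ofReal p ^ (S k).card := fun k => key (S k)
  have hiIndep : iIndepSet E μ := by
    rw [iIndepSet_iff_meas_biInter hEmeas]
    intro K
    have h1 : ⋂ k ∈ K, E k = ⋂ n ∈ K.biUnion S, B n :=
      (Finset.set_biInter_biUnion K S B).symm
    rw [h1, key, Finset.card_biUnion (fun j _ k _ hjk => hdisj j k hjk),
      ← Finset.prod_pow_eq_pow_sum]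
    exact Finset.prod_congr rfl fun k _ => (hEmeasure k).symm
  have hsum : ∑' k, μ (E k) = ∞ := by
    have hle : ∀ k : ℕ, ENNReal.ofReal p ^ (2^L) ≤ μ (E k) := by
      intro k
      rw [hEmeasure]
      refine pow_le_pow_of_le_one zero_le hp1 ?_
      calc (S k).card ≤ (Finset.Ico 1 (2^L)).card := Finset.card_image_le
        _ ≤ 2^L := by rw [Nat.card_Ico]; have := Nat.one_le_two_pow (n := L); omega
    refine top_le_iff.1 ?_
    calc (⊤ : ENNReal) = ∑' _ : ℕ, ENNReal.ofReal p ^ (2^L) :=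
          (ENNReal.tsum_const_eq_top_of_ne_zero (pow_ne_zero _ hp0)).symm
      _ ≤ ∑' k, μ (E k) := ENNReal.tsum_le_tsum hle
  have h1 := measure_limsup_eq_one hEmeas hiIndep hsum
  have hae : ∀ᵐ ω ∂μ, ω ∈ Filter.limsup E Filter.atTop := by
    rw [ae_iff]
    have : {ω | ¬ ω ∈ Filter.limsup E Filter.atTop} = (Filter.limsup E Filter.atTop)ᶜ := rfl
    rw [this, prob_compl_eq_zero_iff (MeasurableSet.measurableSet_limsup fun k => hEmeas k)]
    exact h1
  filter_upwards [hae] with ω hω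
  rw [Filter.mem_limsup_iff_frequently_mem] at hω
  obtain ⟨k, hk⟩ := hω.exists
  refine ⟨fun i => 2^(2^(L*k + i.val)), ?_, ?_⟩
  · intro i j hij
    exact Nat.pow_lt_pow_right one_lt_two
      (Nat.pow_lt_pow_right one_lt_two (by omega))
  · rintro s ⟨F, hFne, rfl⟩
    have hprod : ∏ i ∈ F, 2^(2^(L*k + i.val)) = 2^(2^(L*k) * ∑ i ∈ F, 2^(i.val)) := by
      rw [Finset.prod_pow_eq_pow_sum]
      congr 1
      rw [Finset.mul_sum]
      exact Finset.sum_congr rfl fun i _ => by rw [pow_add]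
    set m : ℕ := ∑ i ∈ F, 2^(i.val) with hm
    have hm1 : 1 ≤ m := by
      obtain ⟨i0, hi0⟩ := hFne
      calc 1 ≤ 2^(i0.val) := Nat.one_le_two_pow
        _ ≤ m := Finset.single_le_sum (f := fun i : Fin L => 2^(i.val)) (fun i _ => Nat.zero_le _) hi0
    have hm2 : m < 2^L := by
      have h1 : m ≤ ∑ i : Fin L, 2^(i.val) :=
        Finset.sum_le_sum_of_subset (Finset.subset_univ F)
      have h2 : ∑ i : Fin L, 2^(i.val) = ∑ i ∈ Finset.range L, 2^i :=
        Fin.sum_univ_eq_sum_range _ _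
      have h3 := sum_range_two_pow L
      have : (1:ℕ) ≤ 2^L := Nat.one_le_two_pow
      omega
    have hmem : 2^(2^(L*k) * m) ∈ S k := by
      simp only [hS, Finset.mem_image, Finset.mem_Ico]
      exact ⟨m, ⟨hm1, hm2⟩, rfl⟩
    have := Set.mem_iInter₂.1 hk _ hmem
    rw [hprod]
    exact this
end

section
/- Fix p ∈ (0,1) and let A be a Bernoulli(p) random subset of ℕ. For N ∈ ℕ let X_N count the pairs (x,y) with 1 ≤ x, y ≤ N such that x, y, x+y, x·y all lie in A. Then the probability that X_N > 0 tends to 1 as N → ∞: lim_{N→∞} μ(X_N > 0) = 1. -/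
open MeasureTheory ProbabilityTheory Filter

/-- For a Bernoulli(`p`) random subset of `ℕ`, the probability that some pair `(x, y)`
with `1 ≤ x, y ≤ N` satisfies `x, y, x+y, x·y ∈ A` tends to `1` as `N → ∞`. -/
theorem hindman_pattern_whp {Ω : Type*} [MeasurableSpace Ω]
    (μ : Measure Ω) [IsProbabilityMeasure μ]
    (p : ℝ) (hp : p ∈ Set.Ioo (0 : ℝ) 1)
    (ε : ℕ → Ω → Bool) (hmeas : ∀ n, Measurable (ε n))
    (hindep : iIndepFun ε μ)
    (hbern : ∀ n, μ {ω | ε n ω = true} = ENNReal.ofReal p)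
    (X : ℕ → Ω → ℕ)
    (hX : ∀ N ω, X N ω = ((Finset.Icc 1 N ×ˢ Finset.Icc 1 N).filter
      (fun q => ε q.1 ω = true ∧ ε q.2 ω = true ∧ ε (q.1 + q.2) ω = true ∧
        ε (q.1 * q.2) ω = true)).card) :
    Tendsto (fun N => μ {ω | 0 < X N ω}) atTop (nhds 1) := by
  obtain ⟨hp0, hp1⟩ := hp
  set q : ENNReal := ENNReal.ofReal p with hq
  have hq0 : q ≠ 0 := by
    simp only [hq, ne_eq, ENNReal.ofReal_eq_zero, not_le]
    exact hp0
  -- the sequence of "blocks"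
  set x : ℕ → ℕ := fun k => 2 * 3 ^ 3 ^ k with hxdef
  have hx6 : ∀ k, 6 ≤ x k := by
    intro k
    have h1 : 1 ≤ 3 ^ k := Nat.one_le_pow _ _ (by norm_num)
    have h3 : (3 : ℕ) ≤ 3 ^ 3 ^ k :=
      le_trans (by norm_num) (Nat.pow_le_pow_right (by norm_num) h1)
    simp only [hxdef]
    omega
  have hstep : ∀ k, x k * x k < x (k + 1) := by
    intro k
    have h1 : 1 ≤ 3 ^ k := Nat.one_le_pow _ _ (by norm_num)
    have h3 : (3 : ℕ) ≤ 3 ^ 3 ^ k :=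
      le_trans (by norm_num) (Nat.pow_le_pow_right (by norm_num) h1)
    have hexp : 3 ^ (k + 1) = 3 ^ k + (3 ^ k + 3 ^ k) := by rw [pow_succ]; ring
    have hpow : (3 : ℕ) ^ 3 ^ (k + 1) = 3 ^ 3 ^ k * (3 ^ 3 ^ k * 3 ^ 3 ^ k) := by
      rw [hexp, pow_add, pow_add]
    simp only [hxdef, hpow]
    nlinarith [h3]
  have hxmono : StrictMono x := by
    refine strictMono_nat_of_lt_succ fun k => lt_of_lt_of_le ?_ (hstep k).le
    nlinarith [hx6 k]
  set S : ℕ → Finset ℕ := fun k => {x k, 2 * x k, x k * x k} with hSdef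
  have hSmem : ∀ k i, i ∈ S k → x k ≤ i ∧ i ≤ x k * x k := by
    intro k i hi
    have h6 := hx6 k
    simp only [hSdef, Finset.mem_insert, Finset.mem_singleton] at hi
    rcases hi with rfl | rfl | rfl
    · constructor
      · exact le_refl _
      · nlinarith
    · constructor
      · omega
      · nlinarith
    · constructor
      · nlinarith
      · exact le_refl _
  have hScard : ∀ k, (S k).card = 3 := by
    intro k
    have h6 := hx6 k
    have h1 : x k ≠ 2 * x k := by omega
    have h2 : x k ≠ x k * x k := by nlinarith
    have h3 : 2 * x k ≠ x k * x k := by nlinarith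
    simp only [hSdef]
    rw [Finset.card_insert_of_notMem (by simp [h1, h2]),
      Finset.card_insert_of_notMem (by simp [h3]), Finset.card_singleton]
  set E : ℕ → Set Ω := fun k => ⋂ i ∈ S k, {ω | ε i ω = true} with hEdef
  have hevmeas : ∀ n, MeasurableSet {ω | ε n ω = true} := by
    intro n
    exact hmeas n (measurableSet_singleton true)
  have hEmeas : ∀ k, MeasurableSet (E k) := by
    intro k
    exact MeasurableSet.biInter (Finset.countable_toSet _) fun i _ => hevmeas i
  have hEμ : ∀ k, μ (E k) = q ^ 3 := by
    intro k
    have hcalc := hindep.meas_biInter (S := S k) (s := fun i => {ω | ε i ω = true})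
      (fun i _ => ⟨{true}, trivial, rfl⟩)
    rw [hEdef]
    rw [hcalc]
    calc ∏ i ∈ S k, μ {ω | ε i ω = true} = ∏ _i ∈ S k, q :=
          Finset.prod_congr rfl fun i _ => hbern i
      _ = q ^ (S k).card := Finset.prod_const q
      _ = q ^ 3 := by rw [hScard]
  set T : ℕ → Finset ℕ := fun m => (Finset.range m).biUnion S with hTdef
  have hdisj : ∀ m, Disjoint (S m) (T m) := by
    intro m
    rw [Finset.disjoint_left]
    intro i hiS hiT
    obtain ⟨j, hj, hij⟩ := Finset.mem_biUnion.1 hiT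
    rw [Finset.mem_range] at hj
    have h1 := (hSmem m i hiS).1
    have h2 := (hSmem j i hij).2
    have h3 : x j * x j < x m := lt_of_lt_of_le (hstep j) (hxmono.monotone (by omega))
    omega
  set D : ℕ → Set Ω := fun m => ⋂ k ∈ Finset.range m, (E k)ᶜ with hDdef
  have hDμ : ∀ m, μ (D m) = (1 - q ^ 3) ^ m := by
    intro m
    induction m with
    | zero => simp [hDdef]
    | succ m ih =>
      have hD : D (m + 1) = (E m)ᶜ ∩ D m := by
        rw [hDdef]
        simp only
        rw [Finset.range_add_one, Finset.set_biInter_insert]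
      have hIF := hindep.indepFun_finset (S m) (T m) (hdisj m) hmeas
      set F : Ω → (↥(S m) → Bool) := fun ω i => ε i ω with hFdef
      set G : Ω → (↥(T m) → Bool) := fun ω i => ε i ω with hGdef
      set A : Set (↥(S m) → Bool) := {v | ∀ i, v i = true} with hAdef
      set B : Set (↥(T m) → Bool) :=
        {v | ∀ k ∈ Finset.range m, ¬ ∀ i : ↥(T m), (i : ℕ) ∈ S k → v i = true} with hBdef
      have hEA : E m = F ⁻¹' A := by
        ext ω
        simp only [hEdef, Set.mem_iInter, Set.mem_setOf_eq, Set.mem_preimage, hAdef, hFdef,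
          Subtype.forall]
      have hsub : ∀ k, k ∈ Finset.range m → S k ⊆ T m := fun k hk =>
        Finset.subset_biUnion_of_mem S hk
      have hDB : D m = G ⁻¹' B := by
        ext ω
        simp only [hDdef, Set.mem_iInter, Set.mem_compl_iff, hEdef, Set.mem_preimage, hBdef,
          Set.mem_setOf_eq, hGdef, Set.mem_iInter, Subtype.forall]
        refine forall₂_congr fun k hk => not_congr ?_
        constructor
        · intro h i hiT hiS
          exact h i hiS
        · intro h i hiS
          exact h i (hsub k hk hiS) hiS
      have hAmeas : MeasurableSet A := (Set.toFinite A).measurableSet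
      have hBmeas : MeasurableSet B := (Set.toFinite B).measurableSet
      have hmul := (indepFun_iff_measure_inter_preimage_eq_mul.1 hIF) Aᶜ B
        hAmeas.compl hBmeas
      have hEc : (E m)ᶜ = F ⁻¹' Aᶜ := by rw [hEA, Set.preimage_compl]
      have hEcμ : μ ((E m)ᶜ) = 1 - q ^ 3 := by
        rw [measure_compl (hEmeas m) (measure_ne_top μ _), measure_univ, hEμ]
      calc μ (D (m + 1)) = μ (F ⁻¹' Aᶜ ∩ G ⁻¹' B) := by rw [hD, hEc, hDB]
        _ = μ (F ⁻¹' Aᶜ) * μ (G ⁻¹' B) := hmul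
        _ = (1 - q ^ 3) * (1 - q ^ 3) ^ m := by rw [← hEc, ← hDB, hEcμ, ih]
        _ = (1 - q ^ 3) ^ (m + 1) := by rw [mul_comm, ← pow_succ]
  -- the events of interest
  set U : ℕ → Set Ω := fun N => {ω | 0 < X N ω} with hUdef
  have hUeq : ∀ N, U N = ⋃ r ∈ (Finset.Icc 1 N ×ˢ Finset.Icc 1 N),
      {ω | ε r.1 ω = true ∧ ε r.2 ω = true ∧ ε (r.1 + r.2) ω = true ∧
        ε (r.1 * r.2) ω = true} := by
    intro N
    ext ω
    simp only [hUdef, Set.mem_setOf_eq, hX, Finset.card_pos, Set.mem_iUnion,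
      Finset.filter_nonempty_iff, Set.mem_setOf_eq, exists_prop]
  have hUmeas : ∀ N, MeasurableSet (U N) := by
    intro N
    rw [hUeq N]
    refine MeasurableSet.biUnion (Finset.countable_toSet _) fun r _ => ?_
    simp only [Set.setOf_and]
    exact ((hevmeas r.1).inter ((hevmeas r.2).inter
      ((hevmeas (r.1 + r.2)).inter (hevmeas (r.1 * r.2)))))
  have hUmono : Monotone U := by
    intro N M h ω hω
    simp only [hUdef, Set.mem_setOf_eq, hX] at hω ⊢
    refine lt_of_lt_of_le hω (Finset.card_le_card (Finset.filter_subset_filter _ ?_))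
    exact Finset.product_subset_product (Finset.Icc_subset_Icc_right h)
      (Finset.Icc_subset_Icc_right h)
  have hEU : ∀ k, E k ⊆ U (x k) := by
    intro k ω hω
    have h6 := hx6 k
    simp only [hEdef, Set.mem_iInter, Set.mem_setOf_eq] at hω
    have h1 : ε (x k) ω = true := hω _ (by simp [hSdef])
    have h2 : ε (2 * x k) ω = true := hω _ (by simp [hSdef])
    have h3 : ε (x k * x k) ω = true := hω _ (by simp [hSdef])
    simp only [hUdef, Set.mem_setOf_eq, hX, Finset.card_pos]
    refine ⟨(x k, x k), Finset.mem_filter.2 ⟨?_, ?_⟩⟩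
    · exact Finset.mem_product.2 ⟨Finset.mem_Icc.2 ⟨by omega, le_refl _⟩,
        Finset.mem_Icc.2 ⟨by omega, le_refl _⟩⟩
    · refine ⟨h1, h1, ?_, h3⟩
      rw [show x k + x k = 2 * x k by ring]
      exact h2
  have hU : Tendsto (fun N => μ (U N)) atTop (nhds (μ (⋃ N, U N))) :=
    tendsto_measure_iUnion_atTop hUmono
  have hcompl : μ ((⋃ N, U N)ᶜ) = 0 := by
    have hle : ∀ m, μ ((⋃ N, U N)ᶜ) ≤ (1 - q ^ 3) ^ m := by
      intro m
      refine le_trans (measure_mono ?_) (hDμ m).le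
      intro ω hω
      simp only [Set.mem_compl_iff, Set.mem_iUnion, not_exists] at hω
      simp only [hDdef, Set.mem_iInter, Set.mem_compl_iff]
      intro k _ hE
      exact hω (x k) (hEU k hE)
    have h0 : Tendsto (fun m => (1 - q ^ 3 : ENNReal) ^ m) atTop (nhds 0) :=
      ENNReal.tendsto_pow_atTop_nhds_zero_of_lt_one
        (ENNReal.sub_lt_self ENNReal.one_ne_top one_ne_zero (pow_ne_zero 3 hq0))
    exact le_antisymm (ge_of_tendsto' h0 hle) zero_le
  have hunion : μ (⋃ N, U N) = 1 :=
    (prob_compl_eq_zero_iff (MeasurableSet.iUnion hUmeas)).1 hcompl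
  rw [hunion] at hU
  exact hU
end

section
/- (Dominated single-term regime.) With the Bernoulli weighted-sum setup, assume that y_{j_k}^2 / (y_{j_k}^2 + R_k) → 1 as k → ∞ (the variance is asymptotically carried by the single largest summand). Then (S_k − μ_k)/σ_k converges in distribution to (B − p)/√(p(1−p)), where B is a Bernoulli(p) random variable; equivalently, the limit law is the two-point distribution taking the value (1−p)/√(p(1−p)) with probability p and the value −p/√(p(1−p)) with probability 1−p. -/
open MeasureTheory ProbabilityTheory Filter

lemma bdd_integrable {Ω : Type*} [MeasurableSpace Ω] {μ : Measure Ω} [IsFiniteMeasure μ]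
    {g : Ω → ℝ} (hg : Measurable g) (C : ℝ) (hC : ∀ ω, |g ω| ≤ C) : Integrable g μ :=
  (memLp_top_of_bound hg.aestronglyMeasurable C
    (Filter.Eventually.of_forall (by simpa [Real.norm_eq_abs] using hC))).integrable le_top

lemma aux_tendsto_abs_integral {Ω : Type*} [MeasurableSpace Ω] {μ : Measure Ω}
    [IsProbabilityMeasure μ] (f : BoundedContinuousFunction ℝ ℝ)
    (D : ℕ → Ω → ℝ) (hD : ∀ k, Measurable (D k))
    (hD2int : ∀ k, Integrable (fun ω => (D k ω) ^ 2) μ)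
    (hD2 : Tendsto (fun k => ∫ ω, (D k ω) ^ 2 ∂μ) atTop (nhds 0))
    (t : ℕ → ℝ) (t0 : ℝ) (ht : Tendsto t atTop (nhds t0)) :
    Tendsto (fun k => ∫ ω, |f (t k + D k ω) - f t0| ∂μ) atTop (nhds 0) := by
  refine Metric.tendsto_nhds.2 fun e he => ?_
  obtain ⟨δ, hδ, hball⟩ := Metric.continuous_iff.1 f.continuous t0 (e/3) (by linarith)
  have h1 : ∀ᶠ k in atTop, |t k - t0| < δ / 2 := by
    have := Metric.tendsto_nhds.1 ht (δ/2) (by linarith)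
    simpa [Real.dist_eq] using this
  have h2 : ∀ᶠ k in atTop, ∫ ω, (D k ω) ^ 2 ∂μ < e/3 * (δ/2)^2 / (2*‖f‖+1) := by
    have hpos : (0:ℝ) < e/3 * (δ/2)^2 / (2*‖f‖+1) := by
      have : (0:ℝ) ≤ ‖f‖ := norm_nonneg f
      positivity
    have := Metric.tendsto_nhds.1 hD2 _ hpos
    filter_upwards [this] with k hk
    calc ∫ ω, (D k ω) ^ 2 ∂μ ≤ |∫ ω, (D k ω) ^ 2 ∂μ| := le_abs_self _
    _ < _ := by simpa [Real.dist_eq] using hk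
  filter_upwards [h1, h2] with k hk1 hk2
  set E : Set Ω := {ω | δ/2 ≤ |D k ω|} with hEdef
  have hE : MeasurableSet E := measurableSet_le measurable_const (hD k).abs
  have hVnn : 0 ≤ ∫ ω, (D k ω) ^ 2 ∂μ := integral_nonneg fun ω => sq_nonneg _
  -- Chebyshev
  have hcheb : (μ E).toReal * (δ/2)^2 ≤ ∫ ω, (D k ω) ^ 2 ∂μ := by
    have hpt : ∀ ω, E.indicator (fun _ => (δ/2)^2) ω ≤ (D k ω) ^ 2 := by
      intro ω
      by_cases hω : ω ∈ E
      · rw [Set.indicator_of_mem hω]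
        have : (δ/2)^2 ≤ |D k ω| ^ 2 := pow_le_pow_left₀ (by linarith) hω 2
        simpa [sq_abs] using this
      · rw [Set.indicator_of_notMem hω]; exact sq_nonneg _
    have := integral_mono ((integrable_const ((δ/2)^2)).indicator hE) (hD2int k) hpt
    rw [integral_indicator_const _ hE, smul_eq_mul, measureReal_def] at this
    linarith
  -- pointwise bound for the integrand
  have hpt : ∀ ω, |f (t k + D k ω) - f t0| ≤ e/3 + E.indicator (fun _ => 2*‖f‖) ω := by
    intro ω
    by_cases hω : ω ∈ E
    · rw [Set.indicator_of_mem hω]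
      have : |f (t k + D k ω) - f t0| ≤ 2 * ‖f‖ := by
        have := f.dist_le_two_norm (t k + D k ω) t0
        simpa [Real.dist_eq] using this
      linarith
    · rw [Set.indicator_of_notMem hω]
      have hDb : |D k ω| < δ/2 := lt_of_not_ge hω
      have : dist (t k + D k ω) t0 < δ := by
        rw [Real.dist_eq]
        calc |t k + D k ω - t0| = |(t k - t0) + D k ω| := by ring_nf
        _ ≤ |t k - t0| + |D k ω| := abs_add_le _ _
        _ < δ := by linarith
      have := hball _ this
      rw [Real.dist_eq] at this
      linarith
  have hint : Integrable (fun ω => |f (t k + D k ω) - f t0|) μ := by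
    refine bdd_integrable (((f.continuous.measurable).comp
      (measurable_const.add (hD k))).sub measurable_const).abs (2*‖f‖) fun ω => ?_
    rw [abs_abs]
    have := f.dist_le_two_norm (t k + D k ω) t0
    simpa [Real.dist_eq] using this
  have hIle : ∫ ω, |f (t k + D k ω) - f t0| ∂μ
      ≤ e/3 + 2*‖f‖ * (μ E).toReal := by
    have h2' : Integrable (fun ω => e/3 + E.indicator (fun _ => 2*‖f‖) ω) μ :=
      (integrable_const _).add ((integrable_const _).indicator hE)
    have := integral_mono hint h2' hpt
    rw [integral_add (integrable_const _) ((integrable_const _).indicator hE),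
      integral_const, integral_indicator_const _ hE, probReal_univ, measureReal_def,
      smul_eq_mul] at this
    simp only [smul_eq_mul] at this
    linarith
  have hInn : 0 ≤ ∫ ω, |f (t k + D k ω) - f t0| ∂μ := integral_nonneg fun ω => abs_nonneg _
  rw [Real.dist_eq, abs_of_nonneg (by simpa using hInn)]
  simp only [sub_zero]
  have hF : (0:ℝ) ≤ ‖f‖ := norm_nonneg f
  have hEnn : (0:ℝ) ≤ (μ E).toReal := ENNReal.toReal_nonneg
  have hδ2 : (0:ℝ) < (δ/2)^2 := by positivity
  have hc : (2*‖f‖+1) * (e/3 * (δ/2)^2 / (2*‖f‖+1)) = e/3*(δ/2)^2 := by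
    field_simp
  have h4 : (2*‖f‖+1) * (∫ ω, (D k ω) ^ 2 ∂μ) < e/3*(δ/2)^2 := by
    calc (2*‖f‖+1) * (∫ ω, (D k ω) ^ 2 ∂μ)
        < (2*‖f‖+1) * (e/3 * (δ/2)^2 / (2*‖f‖+1)) :=
          mul_lt_mul_of_pos_left hk2 (by linarith)
      _ = e/3*(δ/2)^2 := hc
  have h3 : 2*‖f‖*((μ E).toReal * (δ/2)^2) ≤ 2*‖f‖ * ∫ ω, (D k ω) ^ 2 ∂μ :=
    mul_le_mul_of_nonneg_left hcheb (by linarith)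
  have h5 : (2*‖f‖*(μ E).toReal) * (δ/2)^2 < (e/3)*(δ/2)^2 := by nlinarith
  have h6 : 2*‖f‖*(μ E).toReal < e/3 := lt_of_mul_lt_mul_right h5 (le_of_lt hδ2)
  linarith

lemma int_of_01 {Ω : Type*} [MeasurableSpace Ω] {μ : Measure Ω} [IsFiniteMeasure μ]
    {g : Ω → ℝ} (hg : Measurable g) (h01 : ∀ ω, g ω = 0 ∨ g ω = 1) :
    ∫ ω, g ω ∂μ = (μ {ω | g ω = 1}).toReal := by
  have hgeq : g = Set.indicator {ω | g ω = 1} (fun _ => (1:ℝ)) := by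
    funext ω
    rcases h01 ω with h | h <;> simp [Set.indicator, h]
  have hE : MeasurableSet {ω | g ω = 1} := hg (measurableSet_singleton 1)
  rw [hgeq, integral_indicator hE]
  simp
  rfl

lemma abs_comp_integrable {Ω : Type*} [MeasurableSpace Ω] (μ : Measure Ω) [IsFiniteMeasure μ]
    (f : BoundedContinuousFunction ℝ ℝ) {g : Ω → ℝ} (hg : Measurable g) (t t0 : ℝ) :
    Integrable (fun ω => |f (t + g ω) - f t0|) μ := by
  refine bdd_integrable (((f.continuous.measurable).comp
    (measurable_const.add hg)).sub measurable_const).abs (2*‖f‖) fun ω => ?_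
  rw [abs_abs]
  have := f.dist_le_two_norm (t + g ω) t0
  simpa [Real.dist_eq] using this

/-- **Dominated single-term regime.** If the variance is asymptotically carried by the
single largest summand, i.e. `y_{j_k}² / (y_{j_k}² + R_k) → 1`, then the normalized sums
`(S_k − μ_k)/σ_k` converge in distribution to `(B − p)/√(p(1−p))` with `B ~ Bernoulli(p)`,
i.e. to the two-point law taking the value `(1−p)/√(p(1−p))` with probability `p` and
`−p/√(p(1−p))` with probability `1−p`. Convergence in distribution is expressed via
bounded continuous test functions. -/
theorem dominated_single_term_regime {Ω : Type*} [MeasurableSpace Ω]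
    (μ : Measure Ω) [IsProbabilityMeasure μ]
    (p : ℝ) (hp : p ∈ Set.Ioo (0 : ℝ) 1)
    (ε : ℕ → Ω → ℝ) (hmeas : ∀ j, Measurable (ε j))
    (hindep : iIndepFun ε μ)
    (h01 : ∀ j ω, ε j ω = 0 ∨ ε j ω = 1)
    (hbern : ∀ j, μ {ω | ε j ω = 1} = ENNReal.ofReal p)
    (y : ℕ → ℕ) (hyinj : Function.Injective y) (hypos : ∀ j, 0 < y j)
    (jk : ℕ → ℕ) (hjk_mem : ∀ k, 1 ≤ k → jk k ∈ Finset.range k)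
    (hjk_max : ∀ k, ∀ j ∈ Finset.range k, (y j : ℝ) ^ 2 ≤ (y (jk k) : ℝ) ^ 2)
    (S : ℕ → Ω → ℝ) (hS : ∀ k ω, S k ω = ∑ j ∈ Finset.range k, ε j ω * (y j : ℝ))
    (μk : ℕ → ℝ) (hμk : ∀ k, μk k = p * ∑ j ∈ Finset.range k, (y j : ℝ))
    (σk : ℕ → ℝ)
    (hσk : ∀ k, σk k = Real.sqrt (p * (1 - p) * ∑ j ∈ Finset.range k, (y j : ℝ) ^ 2))
    (R : ℕ → ℝ) (hR : ∀ k, R k = ∑ j ∈ (Finset.range k).erase (jk k), (y j : ℝ) ^ 2)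
    (hdom : Tendsto (fun k => (y (jk k) : ℝ) ^ 2 / ((y (jk k) : ℝ) ^ 2 + R k))
      atTop (nhds 1)) :
    ∀ f : BoundedContinuousFunction ℝ ℝ,
      Tendsto (fun k => ∫ ω, f ((S k ω - μk k) / σk k) ∂μ) atTop
        (nhds (p * f ((1 - p) / Real.sqrt (p * (1 - p))) +
          (1 - p) * f (-p / Real.sqrt (p * (1 - p))))) := by
  obtain ⟨hp0, hp1⟩ := hp
  intro f
  have hq0 : (0:ℝ) < 1 - p := by linarith
  have hpq : (0:ℝ) < p * (1 - p) := mul_pos hp0 hq0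
  have hsq : (0:ℝ) < Real.sqrt (p * (1 - p)) := Real.sqrt_pos.2 hpq
  -- basic facts about ε
  have hεb : ∀ j ω, |ε j ω - p| ≤ 1 := by
    intro j ω
    rcases h01 j ω with h | h <;> rw [h] <;> rw [abs_le] <;> constructor <;> linarith
  have hεint : ∀ j, Integrable (ε j) μ := fun j =>
    bdd_integrable (hmeas j) 1 (fun ω => by rcases h01 j ω with h | h <;> rw [h] <;> norm_num)
  have hEε : ∀ j, ∫ ω, ε j ω ∂μ = p := fun j => by
    rw [int_of_01 (hmeas j) (h01 j), hbern j, ENNReal.toReal_ofReal hp0.le]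
  have hEεp : ∀ j, ∫ ω, (ε j ω - p) ∂μ = 0 := fun j => by
    rw [integral_sub (hεint j) (integrable_const p), hEε, integral_const]
    simp
  have hcross : ∀ i j, i ≠ j → ∫ ω, (ε i ω - p) * (ε j ω - p) ∂μ = 0 := by
    intro i j hij
    have hi : IndepFun (ε i) (ε j) μ := hindep.indepFun hij
    have h2 : IndepFun (fun ω => ε i ω - p) (fun ω => ε j ω - p) μ :=
      hi.comp (measurable_id.sub measurable_const) (measurable_id.sub measurable_const)
    have h3 : ∫ ω, (ε i ω - p) * (ε j ω - p) ∂μ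
        = (∫ ω, (ε i ω - p) ∂μ) * ∫ ω, (ε j ω - p) ∂μ :=
      h2.integral_mul_eq_mul_integral ((hεint i).sub (integrable_const p)).aestronglyMeasurable
        ((hεint j).sub (integrable_const p)).aestronglyMeasurable
    rw [h3, hEεp, hEεp, mul_zero]
  have hvar1 : ∀ j, ∫ ω, (ε j ω - p) ^ 2 ∂μ = p * (1 - p) := by
    intro j
    have hpt : ∀ ω, (ε j ω - p) ^ 2 = (1 - 2*p) * ε j ω + p^2 := by
      intro ω; rcases h01 j ω with h | h <;> rw [h] <;> ring
    calc ∫ ω, (ε j ω - p) ^ 2 ∂μ = ∫ ω, ((1 - 2*p) * ε j ω + p^2) ∂μ :=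
          integral_congr_ae (Filter.Eventually.of_forall hpt)
      _ = (1 - 2*p) * p + p^2 := by
          rw [integral_add ((hεint j).const_mul _) (integrable_const _),
            integral_const_mul, hEε, integral_const]
          simp
      _ = p * (1 - p) := by ring
  have hεjint : ∀ i j, Integrable (fun ω => (ε i ω - p) * (ε j ω - p)) μ := fun i j =>
    bdd_integrable (((hmeas i).sub measurable_const).mul ((hmeas j).sub measurable_const)) 1
      (fun ω => by
        rw [abs_mul]
        exact (mul_le_mul (hεb i ω) (hεb j ω) (abs_nonneg _) zero_le_one).trans_eq (one_mul 1))
  -- measurability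
  have hSm : ∀ k, Measurable (fun ω => (S k ω - μk k) / σk k) := by
    intro k
    have hm : Measurable (S k) := by
      have hfe : S k = fun ω => ∑ j ∈ Finset.range k, ε j ω * (y j : ℝ) :=
        funext fun ω => hS k ω
      rw [hfe]
      exact Finset.measurable_sum _ (fun j _ => (hmeas j).mul_const _)
    exact (hm.sub measurable_const).div_const _
  -- the remainder D
  set D : ℕ → Ω → ℝ :=
    fun k ω => (S k ω - μk k) / σk k - (ε (jk k) ω - p) * ((y (jk k) : ℝ) / σk k) with hDdef
  have hDm : ∀ k, Measurable (D k) := fun k =>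
    (hSm k).sub (((hmeas _).sub measurable_const).mul_const _)
  -- variance bookkeeping
  have hRnn : ∀ k, 0 ≤ R k := fun k => by
    rw [hR]; exact Finset.sum_nonneg fun j _ => sq_nonneg _
  have hy2pos : ∀ k, 0 < ((y (jk k)):ℝ) ^ 2 := fun k =>
    pow_pos (by exact_mod_cast hypos _) 2
  have hVsum : ∀ k, 1 ≤ k →
      ∑ j ∈ Finset.range k, (y j : ℝ) ^ 2 = ((y (jk k)):ℝ) ^ 2 + R k := by
    intro k hk
    rw [hR]
    exact (Finset.add_sum_erase _ _ (hjk_mem k hk)).symm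
  have hVpos : ∀ k, 1 ≤ k → 0 < ∑ j ∈ Finset.range k, (y j : ℝ) ^ 2 := by
    intro k hk
    rw [hVsum k hk]
    have := hRnn k; have := hy2pos k; linarith
  have hσpos : ∀ k, 1 ≤ k → 0 < σk k := fun k hk => by
    rw [hσk]; exact Real.sqrt_pos.2 (mul_pos hpq (hVpos k hk))
  have hσsq : ∀ k, 1 ≤ k → σk k ^ 2 = p * (1-p) * (((y (jk k)):ℝ) ^ 2 + R k) := by
    intro k hk
    rw [hσk, Real.sq_sqrt (mul_nonneg hpq.le (hVpos k hk).le), hVsum k hk]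
  have hdenom : ∀ k, (((y (jk k)):ℝ) ^ 2 + R k) ≠ 0 := fun k =>
    ne_of_gt (by have := hy2pos k; have := hRnn k; linarith)
  -- sum decompositions
  have hXsum : ∀ k ω, (S k ω - μk k) / σk k
      = ∑ j ∈ Finset.range k, (ε j ω - p) * ((y j : ℝ) / σk k) := by
    intro k ω
    rw [hS, hμk, Finset.mul_sum, ← Finset.sum_sub_distrib, Finset.sum_div]
    exact Finset.sum_congr rfl fun j _ => by ring
  have hDsum : ∀ k, 1 ≤ k → ∀ ω, D k ω
      = ∑ j ∈ (Finset.range k).erase (jk k), (ε j ω - p) * ((y j : ℝ) / σk k) := by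
    intro k hk ω
    have h := Finset.add_sum_erase (Finset.range k)
      (fun j => (ε j ω - p) * ((y j : ℝ) / σk k)) (hjk_mem k hk)
    simp only [hDdef]
    rw [hXsum k ω, ← h]
    ring
  -- the variance identity
  have hD2eq : ∀ k, 1 ≤ k →
      ∫ ω, (D k ω) ^ 2 ∂μ = R k / (((y (jk k)):ℝ) ^ 2 + R k) := by
    intro k hk
    have h1 : ∀ ω, (D k ω) ^ 2 = ∑ i ∈ (Finset.range k).erase (jk k),
        ∑ j ∈ (Finset.range k).erase (jk k),
          ((y i : ℝ)/σk k) * ((y j : ℝ)/σk k) * ((ε i ω - p) * (ε j ω - p)) := by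
      intro ω
      rw [hDsum k hk ω, sq, Finset.sum_mul_sum]
      exact Finset.sum_congr rfl fun i _ => Finset.sum_congr rfl fun j _ => by ring
    have hint2 : ∀ i j, Integrable
        (fun ω => ((y i : ℝ)/σk k) * ((y j : ℝ)/σk k) * ((ε i ω - p) * (ε j ω - p))) μ :=
      fun i j => (hεjint i j).const_mul _
    calc ∫ ω, (D k ω) ^ 2 ∂μ
        = ∫ ω, ∑ i ∈ (Finset.range k).erase (jk k), ∑ j ∈ (Finset.range k).erase (jk k),
            ((y i : ℝ)/σk k) * ((y j : ℝ)/σk k) * ((ε i ω - p) * (ε j ω - p)) ∂μ :=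
          integral_congr_ae (Filter.Eventually.of_forall h1)
      _ = ∑ i ∈ (Finset.range k).erase (jk k), ∑ j ∈ (Finset.range k).erase (jk k),
            ((y i : ℝ)/σk k) * ((y j : ℝ)/σk k) * ∫ ω, (ε i ω - p) * (ε j ω - p) ∂μ := by
          rw [integral_finset_sum _ (fun i _ => integrable_finset_sum _ (fun j _ => hint2 i j))]
          exact Finset.sum_congr rfl fun i _ => by
            rw [integral_finset_sum _ (fun j _ => hint2 i j)]
            exact Finset.sum_congr rfl fun j _ => integral_const_mul _ _
      _ = ∑ i ∈ (Finset.range k).erase (jk k), ((y i : ℝ)/σk k) ^ 2 * (p * (1-p)) := by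
          refine Finset.sum_congr rfl fun i hi => ?_
          rw [Finset.sum_eq_single_of_mem i hi]
          · have hii : ∫ ω, (ε i ω - p) * (ε i ω - p) ∂μ = p * (1-p) := by
              rw [← hvar1 i]
              exact integral_congr_ae (Filter.Eventually.of_forall fun ω => (sq _).symm)
            rw [hii]; ring
          · intro j _ hji
            rw [hcross i j (Ne.symm hji), mul_zero]
      _ = R k / (((y (jk k)):ℝ) ^ 2 + R k) := by
          have hσ2 := hσsq k hk
          have hσ0 := (hσpos k hk).ne'
          have hsum : ∑ i ∈ (Finset.range k).erase (jk k), ((y i : ℝ)/σk k) ^ 2 * (p * (1-p))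
              = (p * (1-p) / σk k ^ 2) * R k := by
            rw [hR, Finset.mul_sum]
            exact Finset.sum_congr rfl fun i _ => by
              rw [div_pow]; field_simp
          rw [hsum, hσ2, div_mul_eq_mul_div]
          exact mul_div_mul_left _ _ (ne_of_gt hpq)
  -- the variance tends to 0
  have hratio : Tendsto (fun k => R k / (((y (jk k)):ℝ) ^ 2 + R k)) atTop (nhds 0) := by
    have h := hdom.const_sub (1:ℝ)
    have heq : (fun k => (1:ℝ) - ((y (jk k)):ℝ) ^ 2 / (((y (jk k)):ℝ) ^ 2 + R k))
        = fun k => R k / (((y (jk k)):ℝ) ^ 2 + R k) := by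
      funext k
      field_simp [hdenom k]
      ring
    rw [heq] at h
    simpa using h
  have hD2 : Tendsto (fun k => ∫ ω, (D k ω) ^ 2 ∂μ) atTop (nhds 0) := by
    refine Tendsto.congr' ?_ hratio
    filter_upwards [eventually_ge_atTop 1] with k hk
    exact (hD2eq k hk).symm
  -- integrability of D²
  have hD2int : ∀ k, Integrable (fun ω => (D k ω) ^ 2) μ := by
    intro k
    set B : ℝ := (∑ j ∈ Finset.range k, |(y j : ℝ)/σk k|) + |((y (jk k)):ℝ)/σk k| with hBdef
    have hDb : ∀ ω, |D k ω| ≤ B := by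
      intro ω
      have h1 : |(S k ω - μk k)/σk k| ≤ ∑ j ∈ Finset.range k, |(y j : ℝ)/σk k| := by
        rw [hXsum k ω]
        refine (Finset.abs_sum_le_sum_abs _ _).trans ?_
        refine Finset.sum_le_sum fun j _ => ?_
        rw [abs_mul]
        calc |ε j ω - p| * |(y j : ℝ)/σk k| ≤ 1 * |(y j : ℝ)/σk k| :=
              mul_le_mul_of_nonneg_right (hεb j ω) (abs_nonneg _)
          _ = _ := one_mul _
      have h2 : |(ε (jk k) ω - p) * (((y (jk k)):ℝ)/σk k)| ≤ |((y (jk k)):ℝ)/σk k| := by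
        rw [abs_mul]
        calc |ε (jk k) ω - p| * |((y (jk k)):ℝ)/σk k| ≤ 1 * |((y (jk k)):ℝ)/σk k| :=
              mul_le_mul_of_nonneg_right (hεb _ ω) (abs_nonneg _)
          _ = _ := one_mul _
      have h3 := abs_add_le ((S k ω - μk k)/σk k) (-((ε (jk k) ω - p) * (((y (jk k)):ℝ)/σk k)))
      simp only [hDdef]
      rw [sub_eq_add_neg]
      refine h3.trans ?_
      rw [abs_neg, hBdef]
      exact add_le_add h1 h2
    refine bdd_integrable ((hDm k).pow_const 2) (B ^ 2) fun ω => ?_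
    rw [abs_pow]
    exact pow_le_pow_left₀ (abs_nonneg _) (hDb ω) 2
  -- limits of the two atoms
  have htc : Tendsto (fun k => ((y (jk k)):ℝ)/σk k) atTop
      (nhds (1 / Real.sqrt (p * (1-p)))) := by
    have heq : ∀ᶠ k in atTop,
        Real.sqrt ((((y (jk k)):ℝ) ^ 2 / (((y (jk k)):ℝ) ^ 2 + R k)) / (p * (1-p)))
          = ((y (jk k)):ℝ)/σk k := by
      filter_upwards [eventually_ge_atTop 1] with k hk
      have hσ0 := hσpos k hk
      have h1 : (((y (jk k)):ℝ)/σk k) ^ 2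
          = (((y (jk k)):ℝ) ^ 2 / (((y (jk k)):ℝ) ^ 2 + R k)) / (p * (1-p)) := by
        rw [div_pow, hσsq k hk, div_div, mul_comm (p * (1-p))]
      rw [← h1, Real.sqrt_sq (div_nonneg (Nat.cast_nonneg _) hσ0.le)]
    have h2 : Tendsto (fun k =>
        Real.sqrt ((((y (jk k)):ℝ) ^ 2 / (((y (jk k)):ℝ) ^ 2 + R k)) / (p * (1-p))))
        atTop (nhds (Real.sqrt (1 / (p * (1-p))))) :=
      (Real.continuous_sqrt.tendsto _).comp (hdom.div_const _)
    have h3 : Real.sqrt (1 / (p * (1-p))) = 1 / Real.sqrt (p * (1-p)) := by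
      rw [one_div, Real.sqrt_inv, one_div]
    rw [h3] at h2
    exact h2.congr' heq
  have hta : Tendsto (fun k => (1-p) * (((y (jk k)):ℝ)/σk k)) atTop
      (nhds ((1 - p) / Real.sqrt (p * (1 - p)))) := by
    have h := htc.const_mul (1-p)
    rw [mul_one_div] at h
    exact h
  have htb : Tendsto (fun k => -p * (((y (jk k)):ℝ)/σk k)) atTop
      (nhds (-p / Real.sqrt (p * (1 - p)))) := by
    have h := htc.const_mul (-p)
    rw [mul_one_div] at h
    exact h
  -- apply the key analytic lemma
  have Ia := aux_tendsto_abs_integral f D hDm hD2int hD2 _ _ hta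
  have Ib := aux_tendsto_abs_integral f D hDm hD2int hD2 _ _ htb
  set a0 : ℝ := (1 - p) / Real.sqrt (p * (1 - p)) with ha0
  set b0 : ℝ := -p / Real.sqrt (p * (1 - p)) with hb0
  rw [← tendsto_sub_nhds_zero_iff]
  refine squeeze_zero_norm' ?_ (by simpa only [add_zero] using Ia.add Ib)
  filter_upwards [eventually_ge_atTop 1] with k hk
  -- compare with the two-point law
  set ψ : Ω → ℝ := fun ω => ε (jk k) ω * f a0 + (1 - ε (jk k) ω) * f b0 with hψdef
  have hint1 : Integrable (fun ω => ε (jk k) ω * f a0) μ := (hεint _).mul_const _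
  have hint2 : Integrable (fun ω => (1 - ε (jk k) ω) * f b0) μ :=
    ((integrable_const 1).sub (hεint _)).mul_const _
  have hψint : Integrable ψ μ := hint1.add hint2
  have hψval : ∫ ω, ψ ω ∂μ = p * f a0 + (1-p) * f b0 := by
    simp only [hψdef]
    rw [integral_add hint1 hint2, integral_mul_const, integral_mul_const, hEε,
      integral_sub (integrable_const 1) (hεint _), integral_const, hEε]
    simp
  have hFint : Integrable (fun ω => f ((S k ω - μk k) / σk k)) μ :=
    bdd_integrable (f.continuous.measurable.comp (hSm k)) ‖f‖
      (fun ω => by simpa [Real.norm_eq_abs] using f.norm_coe_le_norm ((S k ω - μk k) / σk k))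
  have habsa := abs_comp_integrable μ f (hDm k) ((1-p) * (((y (jk k)):ℝ)/σk k)) a0
  have habsb := abs_comp_integrable μ f (hDm k) (-p * (((y (jk k)):ℝ)/σk k)) b0
  have hptF : ∀ ω, |f ((S k ω - μk k) / σk k) - ψ ω|
      ≤ |f ((1-p) * (((y (jk k)):ℝ)/σk k) + D k ω) - f a0|
        + |f (-p * (((y (jk k)):ℝ)/σk k) + D k ω) - f b0| := by
    intro ω
    rcases h01 (jk k) ω with h | h
    · have hX : (S k ω - μk k)/σk k = -p * (((y (jk k)):ℝ)/σk k) + D k ω := by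
        simp only [hDdef]; rw [h]; ring
      simp only [hψdef]
      rw [hX, h]
      norm_num
    · have hX : (S k ω - μk k)/σk k = (1-p) * (((y (jk k)):ℝ)/σk k) + D k ω := by
        simp only [hDdef]; rw [h]; ring
      simp only [hψdef]
      rw [hX, h]
      norm_num
  calc ‖∫ ω, f ((S k ω - μk k) / σk k) ∂μ - (p * f a0 + (1-p) * f b0)‖
      = ‖∫ ω, (f ((S k ω - μk k) / σk k) - ψ ω) ∂μ‖ := by
        rw [integral_sub hFint hψint, hψval]
    _ ≤ ∫ ω, ‖f ((S k ω - μk k) / σk k) - ψ ω‖ ∂μ := norm_integral_le_integral_norm _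
    _ ≤ ∫ ω, (|f ((1-p) * (((y (jk k)):ℝ)/σk k) + D k ω) - f a0|
          + |f (-p * (((y (jk k)):ℝ)/σk k) + D k ω) - f b0|) ∂μ := by
        refine integral_mono (hFint.sub hψint).norm (habsa.add habsb) fun ω => ?_
        simpa [Real.norm_eq_abs] using hptF ω
    _ = (∫ ω, |f ((1-p) * (((y (jk k)):ℝ)/σk k) + D k ω) - f a0| ∂μ)
          + ∫ ω, |f (-p * (((y (jk k)):ℝ)/σk k) + D k ω) - f b0| ∂μ :=
        integral_add habsa habsb
end

section
/- (Reinsertion of the removed summand.) With the Bernoulli weighted-sum setup, suppose that p(1−p)·R_k → ∞, that max_{1≤j≤k, j≠j_k} y_j^2 / R_k → 0, and additionally that y_{j_k}^2 / R_k → 0 as k → ∞. Then the full centered sums with the trimmed normalization converge to a standard Gaussian: (S_k − μ_k)/σ_k^{trim} converges in distribution to N(0,1). -/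
open MeasureTheory ProbabilityTheory Filter Real
open scoped NNReal ENNReal Topology

namespace RCLT

/-- Bounded measurable functions are integrable against finite measures. -/
lemma integrable_of_bdd {α : Type*} [MeasurableSpace α] {ν : Measure α} [IsFiniteMeasure ν]
    {g : α → ℝ} (hm : AEStronglyMeasurable g ν) {B : ℝ} (hb : ∀ x, |g x| ≤ B) :
    Integrable g ν := by
  refine Integrable.mono' (integrable_const B) hm ?_
  exact Filter.Eventually.of_forall fun x => by simpa [Real.norm_eq_abs] using hb x

/-- Third-order Taylor bound from pointwise derivative data. -/
lemma taylor3 {f f₁ f₂ f₃ : ℝ → ℝ} {M : ℝ}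
    (h1 : ∀ x, HasDerivAt f (f₁ x) x) (h2 : ∀ x, HasDerivAt f₁ (f₂ x) x)
    (h3 : ∀ x, HasDerivAt f₂ (f₃ x) x) (hM : ∀ x, |f₃ x| ≤ M) (t x : ℝ) :
    |f (t + x) - f t - f₁ t * x - f₂ t * (x ^ 2 / 2)| ≤ M * |x| ^ 3 := by
  have hM0 : 0 ≤ M := le_trans (abs_nonneg _) (hM 0)
  set s : Set ℝ := segment ℝ t (t + x) with hs
  have hconv : Convex ℝ s := convex_segment _ _
  have hts : t ∈ s := left_mem_segment _ _ _
  have htxs : t + x ∈ s := right_mem_segment _ _ _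
  have hdist : ∀ u ∈ s, |u - t| ≤ |x| := by
    intro u hu
    have hu' : u ∈ segment ℝ t (t + x) := hu
    rw [segment_eq_image] at hu'
    obtain ⟨θ, hθ, rfl⟩ := hu'
    simp only [smul_eq_mul]
    have heq : (1 - θ) * t + θ * (t + x) - t = θ * x := by ring
    rw [heq, abs_mul]
    calc |θ| * |x| ≤ 1 * |x| := by
          apply mul_le_mul_of_nonneg_right _ (abs_nonneg x)
          rw [abs_of_nonneg hθ.1]; exact hθ.2
      _ = |x| := one_mul _
  set g : ℝ → ℝ := fun u => f u - f t - f₁ t * (u - t) - f₂ t * ((u - t) ^ 2 / 2) with hg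
  set g₁ : ℝ → ℝ := fun u => f₁ u - f₁ t - f₂ t * (u - t) with hg1
  set g₂ : ℝ → ℝ := fun u => f₂ u - f₂ t with hg2
  have hA' : ∀ u : ℝ, HasDerivAt (fun u : ℝ => u - t) 1 u := fun u => (hasDerivAt_id' (x := u)).sub_const t
  have hC' : ∀ u : ℝ, HasDerivAt (fun u : ℝ => (u - t) ^ 2 / 2) (u - t) u := by
    intro u
    have := ((hA' u).pow 2).div_const 2
    refine this.congr_deriv ?_
    norm_num
  have hdg : ∀ u, HasDerivAt g (g₁ u) u := by
    intro u
    have hB : HasDerivAt (fun u : ℝ => f₁ t * (u - t)) (f₁ t) u := by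
      simpa using (hA' u).const_mul (f₁ t)
    have hD : HasDerivAt (fun u : ℝ => f₂ t * ((u - t) ^ 2 / 2)) (f₂ t * (u - t)) u :=
      (hC' u).const_mul (f₂ t)
    exact (((h1 u).sub_const (f t)).sub hB).sub hD
  have hdg1 : ∀ u, HasDerivAt g₁ (g₂ u) u := by
    intro u
    have hB : HasDerivAt (fun u : ℝ => f₂ t * (u - t)) (f₂ t) u := by
      simpa using (hA' u).const_mul (f₂ t)
    exact ((h2 u).sub_const (f₁ t)).sub hB
  have hdg2 : ∀ u, HasDerivAt g₂ (f₃ u) u := fun u => (h3 u).sub_const (f₂ t)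
  -- step A : |g₂ u| ≤ M * |x| on s
  have hA : ∀ u ∈ s, |g₂ u| ≤ M * |x| := by
    intro u hu
    have := Convex.norm_image_sub_le_of_norm_hasDerivWithin_le
      (f := g₂) (f' := f₃) (s := s) (C := M)
      (fun v _ => (hdg2 v).hasDerivWithinAt)
      (fun v _ => by simpa [Real.norm_eq_abs] using hM v) hconv hts hu
    have h0 : g₂ t = 0 := by simp [hg2]
    rw [h0, sub_zero] at this
    calc |g₂ u| ≤ M * ‖u - t‖ := by simpa [Real.norm_eq_abs] using this
      _ ≤ M * |x| := by
        apply mul_le_mul_of_nonneg_left _ hM0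
        simpa [Real.norm_eq_abs] using hdist u hu
  -- step B : |g₁ u| ≤ M * |x| * |x| on s
  have hB : ∀ u ∈ s, |g₁ u| ≤ M * |x| * |x| := by
    intro u hu
    have := Convex.norm_image_sub_le_of_norm_hasDerivWithin_le
      (f := g₁) (f' := g₂) (s := s) (C := M * |x|)
      (fun v _ => (hdg1 v).hasDerivWithinAt)
      (fun v hv => by simpa [Real.norm_eq_abs] using hA v hv) hconv hts hu
    have h0 : g₁ t = 0 := by simp [hg1]
    rw [h0, sub_zero] at this
    calc |g₁ u| ≤ M * |x| * ‖u - t‖ := by simpa [Real.norm_eq_abs] using this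
      _ ≤ M * |x| * |x| := by
        apply mul_le_mul_of_nonneg_left _ (by positivity)
        simpa [Real.norm_eq_abs] using hdist u hu
  -- step C
  have hC := Convex.norm_image_sub_le_of_norm_hasDerivWithin_le
      (f := g) (f' := g₁) (s := s) (C := M * |x| * |x|)
      (fun v _ => (hdg v).hasDerivWithinAt)
      (fun v hv => by simpa [Real.norm_eq_abs] using hB v hv) hconv hts htxs
  have h0 : g t = 0 := by simp [hg]
  rw [h0, sub_zero] at hC
  have : |g (t + x)| ≤ M * |x| * |x| * |x| := by
    calc |g (t + x)| ≤ M * |x| * |x| * ‖t + x - t‖ := by simpa [Real.norm_eq_abs] using hC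
      _ ≤ M * |x| * |x| * |x| := by simp [Real.norm_eq_abs]
  calc |f (t + x) - f t - f₁ t * x - f₂ t * (x ^ 2 / 2)| = |g (t + x)| := by
        simp only [hg, add_sub_cancel_left]
    _ ≤ M * |x| * |x| * |x| := this
    _ = M * |x| ^ 3 := by ring

/-- Test functions with a uniform third-order Taylor estimate. -/
structure TLike (M B : ℝ) (f f₁ f₂ : ℝ → ℝ) : Prop where
  hM : 0 ≤ M
  cont : Continuous f
  cont1 : Continuous f₁
  cont2 : Continuous f₂
  bdd : ∀ x, |f x| ≤ B
  bdd1 : ∀ x, |f₁ x| ≤ B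
  bdd2 : ∀ x, |f₂ x| ≤ B
  taylor : ∀ t x, |f (t + x) - f t - f₁ t * x - f₂ t * (x ^ 2 / 2)| ≤ M * |x| ^ 3

/-- low moments integrable from third absolute moment -/
lemma integrable_id_of_cube {ν : Measure ℝ} [IsProbabilityMeasure ν]
    (h3 : Integrable (fun x => |x| ^ 3) ν) : Integrable (fun x : ℝ => x) ν := by
  have hI : Integrable (fun x : ℝ => |x| ^ 3 + 1) ν := h3.add (integrable_const 1)
  refine Integrable.mono' hI aestronglyMeasurable_id ?_
  refine Filter.Eventually.of_forall fun x => ?_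
  rw [Real.norm_eq_abs]
  nlinarith [abs_nonneg x, mul_nonneg (sq_nonneg (|x| - 1)) (abs_nonneg x)]

lemma integrable_sq_of_cube {ν : Measure ℝ} [IsProbabilityMeasure ν]
    (h3 : Integrable (fun x => |x| ^ 3) ν) : Integrable (fun x : ℝ => x ^ 2) ν := by
  have hI : Integrable (fun x : ℝ => |x| ^ 3 + 1) ν := h3.add (integrable_const 1)
  refine Integrable.mono' hI ((continuous_pow 2).aestronglyMeasurable) ?_
  refine Filter.Eventually.of_forall fun x => ?_
  rw [Real.norm_eq_abs, abs_pow]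
  nlinarith [abs_nonneg x, mul_nonneg (sq_nonneg (|x| - 1)) (abs_nonneg x)]

/-- One-step replacement estimate. -/
lemma step_bound {ν ρ : Measure ℝ} [IsProbabilityMeasure ν] [IsProbabilityMeasure ρ]
    (hiν : Integrable (fun x => |x| ^ 3) ν) (hiρ : Integrable (fun x => |x| ^ 3) ρ)
    (hm1 : ∫ x, x ∂ν = ∫ x, x ∂ρ) (hm2 : ∫ x, x ^ 2 ∂ν = ∫ x, x ^ 2 ∂ρ)
    {M B : ℝ} {f f₁ f₂ : ℝ → ℝ} (hf : TLike M B f f₁ f₂) (t : ℝ) :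
    |(∫ x, f (t + x) ∂ν) - ∫ x, f (t + x) ∂ρ|
      ≤ M * ((∫ x, |x| ^ 3 ∂ν) + ∫ x, |x| ^ 3 ∂ρ) := by
  have key : ∀ (κ : Measure ℝ) [IsProbabilityMeasure κ], Integrable (fun x => |x| ^ 3) κ →
      (∫ x, f (t + x) ∂κ) = f t + f₁ t * (∫ x, x ∂κ) + f₂ t * ((∫ x, x ^ 2 ∂κ) / 2)
        + ∫ x, (f (t + x) - f t - f₁ t * x - f₂ t * (x ^ 2 / 2)) ∂κ := by
    intro κ _ hiκ
    have i0 : Integrable (fun x : ℝ => f (t + x)) κ :=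
      integrable_of_bdd ((hf.cont.comp (continuous_const.add continuous_id)).aestronglyMeasurable)
        (fun x => hf.bdd (t + x))
    have i1 : Integrable (fun x : ℝ => x) κ := integrable_id_of_cube hiκ
    have i2 : Integrable (fun x : ℝ => x ^ 2) κ := integrable_sq_of_cube hiκ
    have ia1 : Integrable (fun x : ℝ => f t + f₁ t * x) κ := by
      exact (integrable_const _).add (i1.const_mul _)
    have ia2 : Integrable (fun x : ℝ => f₂ t * (x ^ 2 / 2)) κ := by
      exact (i2.div_const 2).const_mul _
    have iall : Integrable (fun x : ℝ => f t + f₁ t * x + f₂ t * (x ^ 2 / 2)) κ := by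
      exact ia1.add ia2
    have : (∫ x, (f (t + x) - (f t + f₁ t * x + f₂ t * (x ^ 2 / 2))) ∂κ)
        = (∫ x, f (t + x) ∂κ) - ∫ x, (f t + f₁ t * x + f₂ t * (x ^ 2 / 2)) ∂κ :=
      integral_sub i0 iall
    have ic : Integrable (fun _ : ℝ => f t) κ := integrable_const _
    have im : Integrable (fun x : ℝ => f₁ t * x) κ := by exact i1.const_mul _
    have h2 : (∫ x, (f t + f₁ t * x + f₂ t * (x ^ 2 / 2)) ∂κ)
        = f t + f₁ t * (∫ x, x ∂κ) + f₂ t * ((∫ x, x ^ 2 ∂κ) / 2) := by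
      rw [integral_add ia1 ia2, integral_add ic im]
      rw [integral_const, integral_const_mul, integral_const_mul, integral_div]
      simp [measure_univ]
    have h3 : (∫ x, (f (t + x) - f t - f₁ t * x - f₂ t * (x ^ 2 / 2)) ∂κ)
        = (∫ x, (f (t + x) - (f t + f₁ t * x + f₂ t * (x ^ 2 / 2))) ∂κ) := by
      congr 1; funext x; ring
    rw [h3, this, h2]; ring
  rw [key ν hiν, key ρ hiρ, hm1, hm2]
  have hbd : ∀ (κ : Measure ℝ) [IsProbabilityMeasure κ], Integrable (fun x => |x| ^ 3) κ →
      |∫ x, (f (t + x) - f t - f₁ t * x - f₂ t * (x ^ 2 / 2)) ∂κ| ≤ M * ∫ x, |x| ^ 3 ∂κ := by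
    intro κ _ hiκ
    calc |∫ x, (f (t + x) - f t - f₁ t * x - f₂ t * (x ^ 2 / 2)) ∂κ|
        ≤ ∫ x, |f (t + x) - f t - f₁ t * x - f₂ t * (x ^ 2 / 2)| ∂κ := by
          simp only [← Real.norm_eq_abs]
          exact norm_integral_le_integral_norm (μ := κ) (fun x => f (t + x) - f t - f₁ t * x - f₂ t * (x ^ 2 / 2))
      _ ≤ ∫ x, M * |x| ^ 3 ∂κ := by
          apply integral_mono_of_nonneg (Filter.Eventually.of_forall fun x => abs_nonneg _)
            (hiκ.const_mul M) (Filter.Eventually.of_forall fun x => hf.taylor t x)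
      _ = M * ∫ x, |x| ^ 3 ∂κ := integral_const_mul _ _
  have e1 := hbd ν hiν
  have e2 := hbd ρ hiρ
  calc |f t + f₁ t * (∫ x, x ∂ρ) + f₂ t * ((∫ x, x ^ 2 ∂ρ) / 2)
        + (∫ x, (f (t + x) - f t - f₁ t * x - f₂ t * (x ^ 2 / 2)) ∂ν)
      - (f t + f₁ t * (∫ x, x ∂ρ) + f₂ t * ((∫ x, x ^ 2 ∂ρ) / 2)
        + ∫ x, (f (t + x) - f t - f₁ t * x - f₂ t * (x ^ 2 / 2)) ∂ρ)|
      = |(∫ x, (f (t + x) - f t - f₁ t * x - f₂ t * (x ^ 2 / 2)) ∂ν)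
        - ∫ x, (f (t + x) - f t - f₁ t * x - f₂ t * (x ^ 2 / 2)) ∂ρ| := by congr 1; ring
    _ ≤ |∫ x, (f (t + x) - f t - f₁ t * x - f₂ t * (x ^ 2 / 2)) ∂ν|
        + |∫ x, (f (t + x) - f t - f₁ t * x - f₂ t * (x ^ 2 / 2)) ∂ρ| := abs_sub _ _
    _ ≤ M * (∫ x, |x| ^ 3 ∂ν) + M * ∫ x, |x| ^ 3 ∂ρ := add_le_add e1 e2
    _ = M * ((∫ x, |x| ^ 3 ∂ν) + ∫ x, |x| ^ 3 ∂ρ) := by ring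

/-- Averaging a TLike triple against a probability measure preserves TLike. -/
lemma TLike.avg {M B : ℝ} {f f₁ f₂ : ℝ → ℝ} (hf : TLike M B f f₁ f₂)
    (ρ : Measure ℝ) [IsProbabilityMeasure ρ] :
    TLike M B (fun t => ∫ x, f (t + x) ∂ρ) (fun t => ∫ x, f₁ (t + x) ∂ρ)
      (fun t => ∫ x, f₂ (t + x) ∂ρ) := by
  have contavg : ∀ (g : ℝ → ℝ), Continuous g → (∀ x, |g x| ≤ B) →
      Continuous fun t => ∫ x, g (t + x) ∂ρ := by
    intro g hg hb
    apply continuous_of_dominated (bound := fun _ => B)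
    · exact fun t => (hg.comp (continuous_const.add continuous_id)).aestronglyMeasurable
    · exact fun t => Filter.Eventually.of_forall fun x => by
        simpa [Real.norm_eq_abs] using hb (t + x)
    · exact integrable_const B
    · exact Filter.Eventually.of_forall fun x =>
        hg.comp (continuous_id.add continuous_const)
  have bddavg : ∀ (g : ℝ → ℝ), (∀ x, |g x| ≤ B) → ∀ t, |∫ x, g (t + x) ∂ρ| ≤ B := by
    intro g hb t
    have := norm_integral_le_of_norm_le_const (μ := ρ) (f := fun x => g (t + x)) (C := B)
      (Filter.Eventually.of_forall fun x => by simpa [Real.norm_eq_abs] using hb (t + x))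
    simpa [Real.norm_eq_abs, measure_univ] using this
  have hB0 : 0 ≤ B := le_trans (abs_nonneg _) (hf.bdd 0)
  refine ⟨hf.hM, contavg f hf.cont hf.bdd, contavg f₁ hf.cont1 hf.bdd1,
    contavg f₂ hf.cont2 hf.bdd2, bddavg f hf.bdd, bddavg f₁ hf.bdd1, bddavg f₂ hf.bdd2, ?_⟩
  intro t x
  have ig : ∀ (g : ℝ → ℝ), Continuous g → (∀ y, |g y| ≤ B) → ∀ (c : ℝ),
      Integrable (fun y : ℝ => g (c + y)) ρ := by
    intro g hg hb c
    exact integrable_of_bdd ((hg.comp (continuous_const.add continuous_id)).aestronglyMeasurable)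
      (fun y => hb (c + y))
  have i1 : Integrable (fun y => f (t + x + y)) ρ := ig f hf.cont hf.bdd (t + x)
  have i1' : Integrable (fun y => f ((t + y) + x)) ρ := by
    apply i1.congr
    filter_upwards with y
    rw [show t + x + y = t + y + x by ring]
  have i2 : Integrable (fun y => f (t + y)) ρ := ig f hf.cont hf.bdd t
  have i3 : Integrable (fun y => f₁ (t + y) * x) ρ := (ig f₁ hf.cont1 hf.bdd1 t).mul_const x
  have i4 : Integrable (fun y => f₂ (t + y) * (x ^ 2 / 2)) ρ :=
    (ig f₂ hf.cont2 hf.bdd2 t).mul_const _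
  have e0 : (∫ y, f (t + x + y) ∂ρ) = ∫ y, f ((t + y) + x) ∂ρ := by
    apply integral_congr_ae
    filter_upwards with y
    rw [show t + x + y = t + y + x by ring]
  have key : (∫ y, f (t + x + y) ∂ρ) - (∫ y, f (t + y) ∂ρ) - (∫ y, f₁ (t + y) ∂ρ) * x
      - (∫ y, f₂ (t + y) ∂ρ) * (x ^ 2 / 2)
      = ∫ y, (f ((t + y) + x) - f (t + y) - f₁ (t + y) * x - f₂ (t + y) * (x ^ 2 / 2)) ∂ρ := by
    have s1 : Integrable (fun y : ℝ => f (t + y + x) - f (t + y)) ρ := by exact i1'.sub i2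
    have s2 : Integrable (fun y : ℝ => f (t + y + x) - f (t + y) - f₁ (t + y) * x) ρ := by
      exact s1.sub i3
    rw [integral_sub s2 i4, integral_sub s1 i3,
      integral_sub i1' i2, e0, integral_mul_const, integral_mul_const]
  rw [key]
  have := norm_integral_le_of_norm_le_const (μ := ρ)
    (f := fun y => f ((t + y) + x) - f (t + y) - f₁ (t + y) * x - f₂ (t + y) * (x ^ 2 / 2))
    (C := M * |x| ^ 3)
    (Filter.Eventually.of_forall fun y => by
      simpa [Real.norm_eq_abs] using hf.taylor (t + y) x)
  simpa [Real.norm_eq_abs, measure_univ] using this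

lemma continuous_pi_sum {n : ℕ} : Continuous (fun x : Fin n → ℝ => ∑ i, x i) :=
  continuous_finset_sum _ (fun i _ => continuous_apply i)

/-- Splitting off the 0-th coordinate of an integral over a finite product measure. -/
lemma pi_succ_integral (n : ℕ) (ν : Fin (n + 1) → Measure ℝ) [∀ i, IsProbabilityMeasure (ν i)]
    {g : ℝ → ℝ} (hg : Continuous g) {B : ℝ} (hb : ∀ x, |g x| ≤ B) :
    (∫ x, g (∑ i, x i) ∂Measure.pi ν)
      = ∫ y, (∫ u, g ((∑ j, y j) + u) ∂(ν 0))
          ∂Measure.pi (fun j => ν (Fin.succAbove 0 j)) := by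
  set e := MeasurableEquiv.piFinSuccAbove (fun _ : Fin (n + 1) => ℝ) 0 with he
  have mp := measurePreserving_piFinSuccAbove ν 0
  set G : ℝ × (Fin n → ℝ) → ℝ := fun z => g (z.1 + ∑ j, z.2 j) with hG
  have hGcont : Continuous G := hg.comp (continuous_fst.add (continuous_pi_sum.comp continuous_snd))
  have h0 : ∀ x : Fin (n + 1) → ℝ, G (e x) = g (∑ i, x i) := by
    intro x
    have hex : e x = (x 0, fun j => x (Fin.succAbove 0 j)) := by
      simp [he, MeasurableEquiv.piFinSuccAbove_apply]
      exact funext fun _ => rfl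
    rw [hex, hG]
    simp only
    rw [← Fin.sum_univ_succAbove x 0]
  have E := mp.integral_comp (MeasurableEquiv.measurableEmbedding e) G
  have iG : Integrable G (((ν 0)).prod (Measure.pi fun j => ν (Fin.succAbove 0 j))) :=
    integrable_of_bdd hGcont.aestronglyMeasurable (fun z => hb _)
  calc (∫ x, g (∑ i, x i) ∂Measure.pi ν) = ∫ x, G (e x) ∂Measure.pi ν := by
        apply integral_congr_ae
        filter_upwards with x
        rw [h0]
    _ = ∫ z, G z ∂((ν 0).prod (Measure.pi fun j => ν (Fin.succAbove 0 j))) := E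
    _ = ∫ y, (∫ u, G (u, y) ∂(ν 0)) ∂Measure.pi (fun j => ν (Fin.succAbove 0 j)) :=
        integral_prod_symm G iG
    _ = _ := by
        apply integral_congr_ae
        filter_upwards with y
        apply integral_congr_ae
        filter_upwards with u
        rw [hG]
        simp only
        rw [add_comm]

/-- The Lindeberg replacement bound for finite products. -/
lemma lindeberg_pi : ∀ (n : ℕ) (ν ρ : Fin n → Measure ℝ),
    (∀ i, IsProbabilityMeasure (ν i)) → (∀ i, IsProbabilityMeasure (ρ i)) →
    ∀ (_hiν : ∀ i, Integrable (fun x => |x| ^ 3) (ν i))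
      (_hiρ : ∀ i, Integrable (fun x => |x| ^ 3) (ρ i))
      (_hm1 : ∀ i, ∫ x, x ∂(ν i) = ∫ x, x ∂(ρ i))
      (_hm2 : ∀ i, ∫ x, x ^ 2 ∂(ν i) = ∫ x, x ^ 2 ∂(ρ i))
      {M B : ℝ} {f f₁ f₂ : ℝ → ℝ} (_hf : TLike M B f f₁ f₂),
    |(∫ x, f (∑ i, x i) ∂Measure.pi ν) - ∫ x, f (∑ i, x i) ∂Measure.pi ρ|
      ≤ M * ∑ i, ((∫ x, |x| ^ 3 ∂(ν i)) + ∫ x, |x| ^ 3 ∂(ρ i)) := by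
  intro n
  induction n with
  | zero =>
    intro ν ρ hνp hρp hiν hiρ hm1 hm2 M B f f₁ f₂ hf
    haveI := hνp; haveI := hρp
    simp only [Finset.univ_eq_empty, Finset.sum_empty, integral_const, measure_univ,
      ENNReal.toReal_one, probReal_univ, one_smul, sub_self, abs_zero, mul_zero, le_refl]
  | succ n IH =>
    intro ν ρ hνp hρp hiν hiρ hm1 hm2 M B f f₁ f₂ hf
    haveI := hνp; haveI := hρp
    set tν := fun j : Fin n => ν (Fin.succAbove 0 j) with htν
    set tρ := fun j : Fin n => ρ (Fin.succAbove 0 j) with htρ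
    haveI : ∀ j, IsProbabilityMeasure (tν j) := fun j => hνp _
    haveI : ∀ j, IsProbabilityMeasure (tρ j) := fun j => hρp _
    set gν : ℝ → ℝ := fun t => ∫ u, f (t + u) ∂(ν 0) with hgν
    set gρ : ℝ → ℝ := fun t => ∫ u, f (t + u) ∂(ρ 0) with hgρ
    have hTν := hf.avg (ν 0)
    have hTρ := hf.avg (ρ 0)
    have E1 : (∫ x, f (∑ i, x i) ∂Measure.pi ν) = ∫ y, gν (∑ j, y j) ∂Measure.pi tν :=
      pi_succ_integral n ν hf.cont hf.bdd
    have E2 : (∫ x, f (∑ i, x i) ∂Measure.pi ρ) = ∫ y, gρ (∑ j, y j) ∂Measure.pi tρ :=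
      pi_succ_integral n ρ hf.cont hf.bdd
    -- first comparison: replace ν 0 by ρ 0
    have hstep : ∀ t, |gν t - gρ t| ≤ M * ((∫ x, |x| ^ 3 ∂(ν 0)) + ∫ x, |x| ^ 3 ∂(ρ 0)) :=
      fun t => step_bound (hiν 0) (hiρ 0) (hm1 0) (hm2 0) hf t
    have igν : Integrable (fun y : Fin n → ℝ => gν (∑ j, y j)) (Measure.pi tν) :=
      integrable_of_bdd ((hTν.cont.comp continuous_pi_sum).aestronglyMeasurable)
        (fun y => hTν.bdd _)
    have igρ : Integrable (fun y : Fin n → ℝ => gρ (∑ j, y j)) (Measure.pi tν) :=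
      integrable_of_bdd ((hTρ.cont.comp continuous_pi_sum).aestronglyMeasurable)
        (fun y => hTρ.bdd _)
    have first : |(∫ y, gν (∑ j, y j) ∂Measure.pi tν) - ∫ y, gρ (∑ j, y j) ∂Measure.pi tν|
        ≤ M * ((∫ x, |x| ^ 3 ∂(ν 0)) + ∫ x, |x| ^ 3 ∂(ρ 0)) := by
      rw [← integral_sub igν igρ]
      have := norm_integral_le_of_norm_le_const (μ := Measure.pi tν)
        (f := fun y : Fin n → ℝ => gν (∑ j, y j) - gρ (∑ j, y j))
        (C := M * ((∫ x, |x| ^ 3 ∂(ν 0)) + ∫ x, |x| ^ 3 ∂(ρ 0)))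
        (Filter.Eventually.of_forall fun y => by
          simpa [Real.norm_eq_abs] using hstep (∑ j, y j))
      simpa [Real.norm_eq_abs, measure_univ] using this
    have second : |(∫ y, gρ (∑ j, y j) ∂Measure.pi tν) - ∫ y, gρ (∑ j, y j) ∂Measure.pi tρ|
        ≤ M * ∑ j, ((∫ x, |x| ^ 3 ∂(tν j)) + ∫ x, |x| ^ 3 ∂(tρ j)) :=
      IH tν tρ (fun j => hνp _) (fun j => hρp _) (fun j => hiν _) (fun j => hiρ _)
        (fun j => hm1 _) (fun j => hm2 _) hTρ
    calc |(∫ x, f (∑ i, x i) ∂Measure.pi ν) - ∫ x, f (∑ i, x i) ∂Measure.pi ρ|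
        = |((∫ y, gν (∑ j, y j) ∂Measure.pi tν) - ∫ y, gρ (∑ j, y j) ∂Measure.pi tν)
            + ((∫ y, gρ (∑ j, y j) ∂Measure.pi tν) - ∫ y, gρ (∑ j, y j) ∂Measure.pi tρ)| := by
          rw [E1, E2]; congr 1; ring
      _ ≤ |(∫ y, gν (∑ j, y j) ∂Measure.pi tν) - ∫ y, gρ (∑ j, y j) ∂Measure.pi tν|
            + |(∫ y, gρ (∑ j, y j) ∂Measure.pi tν) - ∫ y, gρ (∑ j, y j) ∂Measure.pi tρ| :=
          abs_add_le _ _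
      _ ≤ M * ((∫ x, |x| ^ 3 ∂(ν 0)) + ∫ x, |x| ^ 3 ∂(ρ 0))
            + M * ∑ j, ((∫ x, |x| ^ 3 ∂(tν j)) + ∫ x, |x| ^ 3 ∂(tρ j)) := add_le_add first second
      _ = M * ∑ i, ((∫ x, |x| ^ 3 ∂(ν i)) + ∫ x, |x| ^ 3 ∂(ρ i)) := by
          simp only [htν, htρ,
            Fin.sum_univ_succAbove (fun i => (∫ x, |x| ^ 3 ∂(ν i)) + ∫ x, |x| ^ 3 ∂(ρ i)) 0]
          ring

section Gauss

lemma pdf_mul {a b : ℝ≥0} (ha : a ≠ 0) (hb : b ≠ 0) (u x : ℝ) :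
    gaussianPDFReal 0 a x * gaussianPDFReal 0 b (u - x)
      = gaussianPDFReal 0 (a + b) u * gaussianPDFReal ((a : ℝ) * u / ((a : ℝ) + b)) (a * b / (a + b)) x := by
  have ha' : (0 : ℝ) < a := lt_of_le_of_ne (a.coe_nonneg) (by exact_mod_cast (Ne.symm ha))
  have hb' : (0 : ℝ) < b := lt_of_le_of_ne (b.coe_nonneg) (by exact_mod_cast (Ne.symm hb))
  have hab : (0 : ℝ) < (a : ℝ) + b := by positivity
  have hcoe : ((a * b / (a + b) : ℝ≥0) : ℝ) = (a : ℝ) * b / ((a : ℝ) + b) := by push_cast; ring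
  simp only [gaussianPDFReal_def, sub_zero, hcoe, NNReal.coe_add]
  rw [mul_mul_mul_comm, mul_mul_mul_comm ((√(2 * π * ((a : ℝ) + b)))⁻¹)]
  congr 1
  · rw [← mul_inv, ← mul_inv, ← Real.sqrt_mul (by positivity), ← Real.sqrt_mul (by positivity)]
    congr 2
    field_simp
  · rw [← Real.exp_add, ← Real.exp_add]
    congr 1
    field_simp
    ring

lemma gaussian_conv (a b : ℝ≥0) :
    ((gaussianReal 0 a).prod (gaussianReal 0 b)).map (fun z : ℝ × ℝ => z.1 + z.2)
      = gaussianReal 0 (a + b) := by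
  rcases eq_or_ne a 0 with rfl | ha
  · rw [gaussianReal_zero_var, Measure.dirac_prod,
      Measure.map_map (by exact measurable_fst.add measurable_snd) (by fun_prop)]
    have : ((fun z : ℝ × ℝ => z.1 + z.2) ∘ (Prod.mk (0 : ℝ))) = id := by
      funext y; simp
    rw [this, Measure.map_id, zero_add]
  rcases eq_or_ne b 0 with rfl | hb
  · rw [gaussianReal_zero_var, Measure.prod_dirac,
      Measure.map_map (by exact measurable_fst.add measurable_snd) (by fun_prop)]
    have : ((fun z : ℝ × ℝ => z.1 + z.2) ∘ (fun x : ℝ => (x, (0 : ℝ)))) = id := by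
      funext y; simp
    rw [this, Measure.map_id, add_zero]
  have hab : a + b ≠ 0 := by
    intro h
    exact ha (add_eq_zero.mp h).1
  have ha' : (0 : ℝ) < a := lt_of_le_of_ne (a.coe_nonneg) (by exact_mod_cast (Ne.symm ha))
  have hb' : (0 : ℝ) < b := lt_of_le_of_ne (b.coe_nonneg) (by exact_mod_cast (Ne.symm hb))
  have hw : (a * b / (a + b) : ℝ≥0) ≠ 0 := by
    rw [div_ne_zero_iff]
    exact ⟨mul_ne_zero ha hb, hab⟩
  have key : ∀ u : ℝ, (∫⁻ x, ENNReal.ofReal (gaussianPDFReal 0 a x) * ENNReal.ofReal (gaussianPDFReal x b u))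
      = gaussianPDF 0 (a + b) u := by
    intro u
    have h1 : ∀ x : ℝ, gaussianPDFReal x b u = gaussianPDFReal 0 b (u - x) := by
      intro x; simp [gaussianPDFReal_def]
    calc (∫⁻ x, ENNReal.ofReal (gaussianPDFReal 0 a x) * ENNReal.ofReal (gaussianPDFReal x b u))
        = ∫⁻ x, ENNReal.ofReal (gaussianPDFReal 0 (a + b) u * gaussianPDFReal ((a : ℝ) * u / ((a : ℝ) + b)) (a * b / (a + b)) x) := by
          apply lintegral_congr fun x => ?_
          rw [h1 x, ← ENNReal.ofReal_mul (gaussianPDFReal_nonneg _ _ _), pdf_mul ha hb]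
      _ = ENNReal.ofReal (gaussianPDFReal 0 (a + b) u) * ∫⁻ x, ENNReal.ofReal (gaussianPDFReal ((a : ℝ) * u / ((a : ℝ) + b)) (a * b / (a + b)) x) := by
          rw [← lintegral_const_mul _ ((measurable_gaussianPDFReal _ _).ennreal_ofReal)]
          apply lintegral_congr fun x => ?_
          rw [← ENNReal.ofReal_mul (gaussianPDFReal_nonneg _ _ _)]
      _ = ENNReal.ofReal (gaussianPDFReal 0 (a + b) u) := by
          rw [lintegral_gaussianPDFReal_eq_one _ hw, mul_one]
      _ = gaussianPDF 0 (a + b) u := by rw [gaussianPDF_def]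
  apply Measure.ext fun s hs => ?_
  rw [Measure.map_apply (by exact measurable_fst.add measurable_snd) hs,
    Measure.prod_apply ((by exact measurable_fst.add measurable_snd : Measurable fun z : ℝ × ℝ => z.1 + z.2) hs)]
  have h2 : ∀ x : ℝ, (gaussianReal 0 b) (Prod.mk x ⁻¹' ((fun z : ℝ × ℝ => z.1 + z.2) ⁻¹' s))
      = ∫⁻ u in s, ENNReal.ofReal (gaussianPDFReal x b u) := by
    intro x
    have hpre : Prod.mk x ⁻¹' ((fun z : ℝ × ℝ => z.1 + z.2) ⁻¹' s) = (fun y : ℝ => x + y) ⁻¹' s := rfl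
    rw [hpre, ← Measure.map_apply (by fun_prop) hs, gaussianReal_map_const_add x, zero_add,
      gaussianReal_apply x hb s]
    apply setLIntegral_congr_fun hs
    exact fun u _ => by rw [gaussianPDF_def]
  calc (∫⁻ x, (gaussianReal 0 b) (Prod.mk x ⁻¹' ((fun z : ℝ × ℝ => z.1 + z.2) ⁻¹' s)) ∂gaussianReal 0 a)
      = ∫⁻ x, (∫⁻ u in s, ENNReal.ofReal (gaussianPDFReal x b u)) ∂gaussianReal 0 a := by
        exact lintegral_congr fun x => h2 x
    _ = ∫⁻ x, ENNReal.ofReal (gaussianPDFReal 0 a x) * (∫⁻ u in s, ENNReal.ofReal (gaussianPDFReal x b u)) ∂volume := by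
        rw [gaussianReal_of_var_ne_zero 0 ha, gaussianPDF_def,
          lintegral_withDensity_eq_lintegral_mul volume
            ((measurable_gaussianPDFReal _ _).ennreal_ofReal)]
        · rfl
        · have hc : Continuous fun p : ℝ × ℝ => gaussianPDFReal p.1 b p.2 := by
            simp only [gaussianPDFReal_def]
            fun_prop
          exact Measurable.lintegral_prod_right'
            (f := fun p : ℝ × ℝ => ENNReal.ofReal (gaussianPDFReal p.1 b p.2))
            hc.measurable.ennreal_ofReal
    _ = ∫⁻ x, (∫⁻ u in s, ENNReal.ofReal (gaussianPDFReal 0 a x) * ENNReal.ofReal (gaussianPDFReal x b u)) ∂volume := by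
        apply lintegral_congr fun x => ?_
        rw [lintegral_const_mul _ ((measurable_gaussianPDFReal _ _).ennreal_ofReal)]
    _ = ∫⁻ u in s, (∫⁻ x, ENNReal.ofReal (gaussianPDFReal 0 a x) * ENNReal.ofReal (gaussianPDFReal x b u) ∂volume) := by
        apply lintegral_lintegral_swap
        have hc : Continuous fun p : ℝ × ℝ => gaussianPDFReal p.1 b p.2 := by
          simp only [gaussianPDFReal_def]
          fun_prop
        exact ((((measurable_gaussianPDFReal 0 a).comp measurable_fst).ennreal_ofReal).mul
          hc.measurable.ennreal_ofReal).aemeasurable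
    _ = ∫⁻ u in s, gaussianPDF 0 (a + b) u := by
        apply lintegral_congr fun u => key u
    _ = gaussianReal 0 (a + b) s := (gaussianReal_apply 0 hab s).symm

end Gauss

section GaussMoments

lemma pi_gauss_sum : ∀ (n : ℕ) (w : Fin n → ℝ≥0),
    (Measure.pi fun i => gaussianReal 0 (w i)).map (fun x => ∑ i, x i)
      = gaussianReal 0 (∑ i, w i) := by
  intro n
  induction n with
  | zero =>
    intro w
    have h : (fun x : Fin 0 → ℝ => ∑ i, x i) = fun _ => (0 : ℝ) := by
      funext x; simp
    rw [h, Measure.map_const, measure_univ, one_smul]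
    simp [gaussianReal_zero_var]
  | succ n IH =>
    intro w
    set ν := fun i : Fin (n + 1) => gaussianReal 0 (w i) with hν
    have mp := measurePreserving_piFinSuccAbove ν 0
    set e := MeasurableEquiv.piFinSuccAbove (fun _ : Fin (n + 1) => ℝ) 0 with he
    have hfun : (fun x : Fin (n + 1) → ℝ => ∑ i, x i)
        = (fun z : ℝ × (Fin n → ℝ) => z.1 + ∑ j, z.2 j) ∘ e := by
      funext x
      have hex : e x = (x 0, fun j => x (Fin.succAbove 0 j)) := by
        simp [he, MeasurableEquiv.piFinSuccAbove_apply]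
        exact funext fun _ => rfl
      simp only [Function.comp_apply, hex]
      exact Fin.sum_univ_succAbove x 0
    have hm : Measurable (fun z : ℝ × (Fin n → ℝ) => z.1 + ∑ j, z.2 j) :=
      measurable_fst.add (continuous_pi_sum.measurable.comp measurable_snd)
    rw [hfun, ← Measure.map_map hm e.measurable, mp.map_eq]
    have hsplit : (fun z : ℝ × (Fin n → ℝ) => z.1 + ∑ j, z.2 j)
        = (fun w : ℝ × ℝ => w.1 + w.2) ∘ (Prod.map (id : ℝ → ℝ) (fun y : Fin n → ℝ => ∑ j, y j)) := by
      funext z; rfl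
    rw [hsplit, ← Measure.map_map (by exact measurable_fst.add measurable_snd)
      (measurable_id.prodMap continuous_pi_sum.measurable),
      ← Measure.map_prod_map _ _ measurable_id continuous_pi_sum.measurable,
      Measure.map_id, IH (fun j => w (Fin.succAbove 0 j)), gaussian_conv,
      ← Fin.sum_univ_succAbove w 0]

lemma integrable_pow_mul_exp (n : ℕ) {b : ℝ} (hb : 0 < b) :
    Integrable (fun x : ℝ => |x| ^ n * rexp (-b * x ^ 2)) := by
  have h1 : Integrable (fun x : ℝ => rexp (-b * x ^ 2)) := integrable_exp_neg_mul_sq hb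
  have h2 : Integrable (fun x : ℝ => x ^ (2 * n) * rexp (-b * x ^ 2)) := by
    have h := integrable_rpow_mul_exp_neg_mul_sq hb (s := ((2 * n : ℕ) : ℝ))
      ((by norm_num : (-1 : ℝ) < 0).trans_le (by positivity))
    apply h.congr
    filter_upwards with x
    rw [Real.rpow_natCast]
  have hI : Integrable (fun x : ℝ => x ^ (2 * n) * rexp (-b * x ^ 2) + rexp (-b * x ^ 2)) :=
    h2.add h1
  refine Integrable.mono' hI ?_ ?_
  · exact ((continuous_abs.pow n).mul (by fun_prop)).aestronglyMeasurable
  refine Filter.Eventually.of_forall fun x => ?_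
  have habs : |x| ^ (2 * n) = x ^ (2 * n) := by
    rw [pow_mul, pow_mul, sq_abs]
  have hxn : |x| ^ n ≤ x ^ (2 * n) + 1 := by
    rcases le_or_gt (|x|) 1 with h | h
    · have := pow_le_one₀ (abs_nonneg x) h (n := n)
      nlinarith [pow_nonneg (pow_nonneg (sq_nonneg x) n : (0:ℝ) ≤ (x^2)^n) 1,
        (by rw [← pow_mul] : (x ^ 2) ^ n = x ^ (2 * n))]
    · have h2n : |x| ^ n ≤ |x| ^ (2 * n) :=
        pow_le_pow_right₀ h.le (by omega)
      rw [habs] at h2n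
      linarith
  have he : (0 : ℝ) < rexp (-b * x ^ 2) := Real.exp_pos _
  rw [Real.norm_eq_abs, abs_of_nonneg (by positivity)]
  nlinarith

lemma gauss_pdf_one (x : ℝ) :
    gaussianPDFReal 0 1 x = (√(2 * π))⁻¹ * rexp (-(1 / 2 : ℝ) * x ^ 2) := by
  simp only [gaussianPDFReal_def, sub_zero, NNReal.coe_one, mul_one]
  congr 1
  rw [neg_div, neg_mul]
  congr 1
  ring

lemma gauss_integral_one (g : ℝ → ℝ) :
    ∫ x, g x ∂(gaussianReal 0 1) = ∫ x, gaussianPDFReal 0 1 x * g x := by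
  rw [gaussianReal_of_var_ne_zero 0 one_ne_zero, gaussianPDF_def]
  have hwd : (volume.withDensity fun x => ENNReal.ofReal (gaussianPDFReal 0 1 x))
      = volume.withDensity fun x => ((gaussianPDFReal 0 1 x).toNNReal : ℝ≥0∞) := rfl
  rw [hwd, integral_withDensity_eq_integral_smul
    (measurable_gaussianPDFReal 0 1).real_toNNReal g]
  apply integral_congr_ae
  filter_upwards with x
  rw [NNReal.smul_def, smul_eq_mul, Real.coe_toNNReal _ (gaussianPDFReal_nonneg 0 1 x)]

lemma gauss_integrable_iff (g : ℝ → ℝ) :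
    Integrable g (gaussianReal 0 1) ↔ Integrable (fun x => gaussianPDFReal 0 1 x * g x) volume := by
  rw [gaussianReal_of_var_ne_zero 0 one_ne_zero, gaussianPDF_def]
  have hwd : (volume.withDensity fun x => ENNReal.ofReal (gaussianPDFReal 0 1 x))
      = volume.withDensity fun x => ((gaussianPDFReal 0 1 x).toNNReal : ℝ≥0∞) := rfl
  rw [hwd, integrable_withDensity_iff_integrable_smul
    (measurable_gaussianPDFReal 0 1).real_toNNReal]
  constructor <;> intro h <;> apply h.congr <;> filter_upwards with x <;>
    rw [NNReal.smul_def, smul_eq_mul, Real.coe_toNNReal _ (gaussianPDFReal_nonneg 0 1 x)]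

lemma gauss_integrable_abs_pow (n : ℕ) : Integrable (fun x => |x| ^ n) (gaussianReal 0 1) := by
  rw [gauss_integrable_iff]
  have h := (integrable_pow_mul_exp n (b := (1/2 : ℝ)) (by norm_num)).const_mul ((√(2 * π))⁻¹)
  apply h.congr
  filter_upwards with x
  rw [gauss_pdf_one]
  ring

end GaussMoments

section Moments

lemma exp_half_tendsto : Tendsto (fun x : ℝ => x * rexp (-(1/2 : ℝ) * x ^ 2)) atTop (𝓝 0) := by
  have h := rpow_mul_exp_neg_mul_sq_isLittleO_exp_neg (by norm_num : (0:ℝ) < 1/2) 1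
  have h0 : Tendsto (fun x : ℝ => rexp (-(1/2 : ℝ) * x)) atTop (𝓝 0) := by
    have h1 : Tendsto (fun x : ℝ => (1/2 : ℝ) * x) atTop atTop :=
      Filter.Tendsto.const_mul_atTop (by norm_num) tendsto_id
    have h2 : Tendsto (fun x : ℝ => -(1/2 : ℝ) * x) atTop atBot := by
      simp only [neg_mul]
      exact tendsto_neg_atTop_atBot.comp h1
    exact Real.tendsto_exp_atBot.comp h2
  have h2 := h.trans_tendsto h0
  apply h2.congr
  intro x
  rw [Real.rpow_one]

lemma integral_sq_exp : (∫ x : ℝ, x ^ 2 * rexp (-(1/2 : ℝ) * x ^ 2)) = √(2 * π) := by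
  have hderiv : ∀ x : ℝ, HasDerivAt (fun x : ℝ => -x * rexp (-(1/2 : ℝ) * x ^ 2))
      (x ^ 2 * rexp (-(1/2 : ℝ) * x ^ 2) - rexp (-(1/2 : ℝ) * x ^ 2)) x := by
    intro x
    have hinner : HasDerivAt (fun x : ℝ => -(1/2 : ℝ) * x ^ 2) (-(1/2 : ℝ) * (2 * x ^ 1)) x :=
      (hasDerivAt_pow 2 x).const_mul _
    have hexp := hinner.exp
    have hmul := ((hasDerivAt_id x).neg).mul hexp
    refine hmul.congr_deriv ?_
    simp only [Pi.neg_apply, id_eq]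
    ring
  have hx2e : Integrable (fun x : ℝ => x ^ 2 * rexp (-(1/2 : ℝ) * x ^ 2)) := by
    apply (integrable_pow_mul_exp 2 (b := (1/2 : ℝ)) (by norm_num)).congr
    filter_upwards with x
    rw [sq_abs]
  have he : Integrable (fun x : ℝ => rexp (-(1/2 : ℝ) * x ^ 2)) :=
    integrable_exp_neg_mul_sq (by norm_num)
  have hint : Integrable (fun x : ℝ => x ^ 2 * rexp (-(1/2 : ℝ) * x ^ 2)
      - rexp (-(1/2 : ℝ) * x ^ 2)) := hx2e.sub he
  have htop : Tendsto (fun x : ℝ => -x * rexp (-(1/2 : ℝ) * x ^ 2)) atTop (𝓝 0) := by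
    have := exp_half_tendsto.neg
    rw [neg_zero] at this
    apply this.congr
    intro x; ring
  have hbot : Tendsto (fun x : ℝ => -x * rexp (-(1/2 : ℝ) * x ^ 2)) atBot (𝓝 0) := by
    have hcongr : (fun x : ℝ => x * rexp (-(1/2 : ℝ) * x ^ 2)) ∘ Neg.neg
        = fun x : ℝ => -x * rexp (-(1/2 : ℝ) * x ^ 2) := by
      funext x
      simp only [Function.comp_apply]
      rw [neg_pow]
      norm_num
    rw [← hcongr]
    exact exp_half_tendsto.comp tendsto_neg_atBot_atTop
  have hFTC := integral_of_hasDerivAt_of_tendsto hderiv hint hbot htop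
  rw [sub_zero] at hFTC
  rw [integral_sub hx2e he] at hFTC
  have hgauss : (∫ x : ℝ, rexp (-(1/2 : ℝ) * x ^ 2)) = √(2 * π) := by
    rw [integral_gaussian]
    congr 1
    ring
  linarith [hgauss, hFTC]

end Moments

section MomentsV

/-- The third absolute moment of the standard Gaussian. -/
noncomputable def C3 : ℝ := ∫ x, |x| ^ 3 ∂(gaussianReal 0 1)

lemma C3_nonneg : 0 ≤ C3 :=
  integral_nonneg fun x => by positivity

lemma gauss_scale (v : ℝ≥0) :
    gaussianReal 0 v = (gaussianReal 0 1).map (fun x => (√(v : ℝ)) * x) := by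
  rw [gaussianReal_map_const_mul (√(v : ℝ))]
  congr 1
  · simp
  · ext
    simp [Real.sq_sqrt v.coe_nonneg]

lemma gauss_integral_scale (v : ℝ≥0) {g : ℝ → ℝ} (hg : Measurable g) :
    (∫ x, g x ∂gaussianReal 0 v) = ∫ x, g (√(v : ℝ) * x) ∂gaussianReal 0 1 := by
  rw [gauss_scale v, integral_map (by fun_prop) hg.aestronglyMeasurable]

lemma gauss_integrable_scale (v : ℝ≥0) {g : ℝ → ℝ} (hg : Measurable g) :
    Integrable g (gaussianReal 0 v) ↔
      Integrable (fun x => g (√(v : ℝ) * x)) (gaussianReal 0 1) := by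
  rw [gauss_scale v]
  exact integrable_map_measure hg.aestronglyMeasurable (by fun_prop)

lemma gauss_i3 (v : ℝ≥0) : Integrable (fun x => |x| ^ 3) (gaussianReal 0 v) := by
  rw [gauss_integrable_scale v (by fun_prop)]
  have h := (gauss_integrable_abs_pow 3).const_mul ((√(v : ℝ)) ^ 3)
  apply h.congr
  filter_upwards with x
  rw [abs_mul, mul_pow, abs_of_nonneg (Real.sqrt_nonneg _)]

lemma gauss_m1 (v : ℝ≥0) : (∫ x, x ∂gaussianReal 0 v) = 0 := by
  have hmap : (gaussianReal 0 v).map (fun x : ℝ => -x) = gaussianReal 0 v := by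
    have h := gaussianReal_map_const_mul (μ := 0) (v := v) (-1)
    have hfun : (fun x : ℝ => -1 * x) = fun x : ℝ => -x := by funext x; ring
    rw [hfun] at h
    rw [h]
    congr 1
    · ring
    · ext; simp
  have hi : Integrable (fun x : ℝ => x) (gaussianReal 0 v) :=
    integrable_id_of_cube (gauss_i3 v)
  have h2 : (∫ x, x ∂(gaussianReal 0 v).map (fun x : ℝ => -x)) = ∫ x, -x ∂gaussianReal 0 v :=
    integral_map (by fun_prop) aestronglyMeasurable_id
  rw [hmap, integral_neg] at h2
  linarith [h2]

lemma gauss_m2 (v : ℝ≥0) : (∫ x, x ^ 2 ∂gaussianReal 0 v) = v := by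
  have base : (∫ x, x ^ 2 ∂gaussianReal 0 1) = 1 := by
    rw [gauss_integral_one]
    have : (∫ x, gaussianPDFReal 0 1 x * x ^ 2)
        = (√(2 * π))⁻¹ * ∫ x : ℝ, x ^ 2 * rexp (-(1/2 : ℝ) * x ^ 2) := by
      rw [← integral_const_mul]
      apply integral_congr_ae
      filter_upwards with x
      rw [gauss_pdf_one]
      ring
    rw [this, integral_sq_exp, inv_mul_cancel₀]
    positivity
  rw [gauss_integral_scale v (by fun_prop)]
  have : (∫ x, (√(v : ℝ) * x) ^ 2 ∂gaussianReal 0 1)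
      = (v : ℝ) * ∫ x, x ^ 2 ∂gaussianReal 0 1 := by
    rw [← integral_const_mul]
    apply integral_congr_ae
    filter_upwards with x
    rw [mul_pow, Real.sq_sqrt v.coe_nonneg]
  rw [this, base, mul_one]

lemma gauss_m3 (v : ℝ≥0) : (∫ x, |x| ^ 3 ∂gaussianReal 0 v) = (√(v : ℝ)) ^ 3 * C3 := by
  rw [gauss_integral_scale v (by fun_prop), C3, ← integral_const_mul]
  apply integral_congr_ae
  filter_upwards with x
  rw [abs_mul, mul_pow, abs_of_nonneg (Real.sqrt_nonneg _)]

end MomentsV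

section Bern

variable {Ω : Type*} [MeasurableSpace Ω] {μ : Measure Ω} [IsProbabilityMeasure μ]

lemma law_pi (g : ℕ → Ω → ℝ) (hg : ∀ j, Measurable (g j))
    (hind : iIndepFun g μ) (k : ℕ) :
    μ.map (fun ω (j : Fin k) => g j ω) = Measure.pi (fun j : Fin k => μ.map (g (j : ℕ))) := by
  classical
  refine (Measure.pi_eq fun s hs => ?_).symm
  have hV : Measurable (fun ω (j : Fin k) => g j ω) := measurable_pi_lambda _ (fun j => hg j)
  rw [Measure.map_apply hV (MeasurableSet.univ_pi hs)]
  set s' : ℕ → Set ℝ := fun i => if h : i < k then s ⟨i, h⟩ else Set.univ with hs'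
  have hpre : (fun ω (j : Fin k) => g j ω) ⁻¹' (Set.univ.pi s)
      = ⋂ i ∈ Finset.range k, g i ⁻¹' s' i := by
    ext ω
    simp only [Set.mem_preimage, Set.mem_pi, Set.mem_univ, forall_true_left, Set.mem_iInter,
      Finset.mem_range, hs']
    constructor
    · intro h i hi
      simp only [Set.mem_preimage, dif_pos hi]
      exact h ⟨i, hi⟩
    · intro h j
      have := h j j.isLt
      simpa only [Set.mem_preimage, dif_pos j.isLt, Fin.eta] using this
  rw [hpre, (iIndepFun_iff_measure_inter_preimage_eq_mul.mp hind) (Finset.range k)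
    (fun i hi => ?_)]
  · rw [← Fin.prod_univ_eq_prod_range (fun i => μ (g i ⁻¹' s' i)) k]
    apply Finset.prod_congr rfl
    intro j _
    rw [Measure.map_apply (hg _) (hs j)]
    congr 1
    simp only [hs', dif_pos j.isLt, Fin.eta]
  · simp only [hs']
    split
    · exact hs _
    · exact MeasurableSet.univ

variable {p : ℝ} {ε : ℕ → Ω → ℝ}

lemma bern_int (hp : p ∈ Set.Ioo (0 : ℝ) 1) (hmeas : ∀ j, Measurable (ε j)) (h01 : ∀ j ω, ε j ω = 0 ∨ ε j ω = 1)
    (hbern : ∀ j, μ {ω | ε j ω = 1} = ENNReal.ofReal p) (j : ℕ)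
    (F : ℝ → ℝ) (hF : Measurable F) :
    Integrable (fun ω => F (ε j ω)) μ ∧
      (∫ ω, F (ε j ω) ∂μ) = p * F 1 + (1 - p) * F 0 := by
  have hA : MeasurableSet {ω | ε j ω = 1} := (hmeas j) (measurableSet_singleton 1)
  have hμA : μ {ω | ε j ω = 1} = ENNReal.ofReal p := hbern j
  have hpt : (fun ω => F (ε j ω))
      = fun ω => {ω | ε j ω = 1}.indicator (fun _ => F 1) ω
          + {ω | ε j ω = 1}ᶜ.indicator (fun _ => F 0) ω := by
    funext ω
    rcases h01 j ω with h | h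
    · have hω : ω ∉ {ω | ε j ω = 1} := by simp [Set.mem_setOf_eq, h]
      simp [Set.indicator_apply, hω, h]
    · have hω : ω ∈ {ω | ε j ω = 1} := by simp [Set.mem_setOf_eq, h]
      simp [Set.indicator_apply, hω, h]
  have hi1 : Integrable ({ω | ε j ω = 1}.indicator (fun _ => F 1)) μ :=
    (integrable_const (F 1)).indicator hA
  have hi2 : Integrable ({ω | ε j ω = 1}ᶜ.indicator (fun _ => F 0)) μ :=
    (integrable_const (F 0)).indicator hA.compl
  constructor
  · rw [hpt]; exact hi1.add hi2
  rw [hpt, integral_add hi1 hi2, integral_indicator_const _ hA, integral_indicator_const _ hA.compl]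
  have hc : μ {ω | ε j ω = 1}ᶜ = 1 - ENNReal.ofReal p := by
    rw [measure_compl hA (measure_ne_top μ _), measure_univ, hμA]
  rw [measureReal_def, measureReal_def, hμA, hc, ENNReal.toReal_ofReal hp.1.le]
  have hle : ENNReal.ofReal p ≤ 1 := by
    rw [← ENNReal.ofReal_one]
    exact ENNReal.ofReal_le_ofReal hp.2.le
  rw [ENNReal.toReal_sub_of_le hle (by norm_num), ENNReal.toReal_one,
    ENNReal.toReal_ofReal hp.1.le]
  simp [smul_eq_mul]

end Bern

section Key

variable {Ω : Type*} [MeasurableSpace Ω]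

lemma key_tendsto
    (μ : Measure Ω) [IsProbabilityMeasure μ]
    (p : ℝ) (hp : p ∈ Set.Ioo (0 : ℝ) 1)
    (ε : ℕ → Ω → ℝ) (hmeas : ∀ j, Measurable (ε j))
    (hindep : iIndepFun ε μ)
    (h01 : ∀ j ω, ε j ω = 0 ∨ ε j ω = 1)
    (hbern : ∀ j, μ {ω | ε j ω = 1} = ENNReal.ofReal p)
    (y : ℕ → ℕ) (hypos : ∀ j, 0 < y j)
    (jk : ℕ → ℕ) (hjk_mem : ∀ k, 1 ≤ k → jk k ∈ Finset.range k)
    (hjk_max : ∀ k, ∀ j ∈ Finset.range k, (y j : ℝ) ^ 2 ≤ (y (jk k) : ℝ) ^ 2)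
    (S : ℕ → Ω → ℝ) (hS : ∀ k ω, S k ω = ∑ j ∈ Finset.range k, ε j ω * (y j : ℝ))
    (μk : ℕ → ℝ) (hμk : ∀ k, μk k = p * ∑ j ∈ Finset.range k, (y j : ℝ))
    (R : ℕ → ℝ) (hR : ∀ k, R k = ∑ j ∈ (Finset.range k).erase (jk k), (y j : ℝ) ^ 2)
    (σtrim : ℕ → ℝ) (hσtrim : ∀ k, σtrim k = Real.sqrt (p * (1 - p) * R k))
    (hvar : Tendsto (fun k => p * (1 - p) * R k) atTop atTop)
    (hremoved : Tendsto (fun k => (y (jk k) : ℝ) ^ 2 / R k) atTop (nhds 0))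
    {M B : ℝ} {f f₁ f₂ : ℝ → ℝ} (hf : TLike M B f f₁ f₂) :
    Tendsto (fun k => ∫ ω, f ((S k ω - μk k) / σtrim k) ∂μ) atTop
      (nhds (∫ x, f x ∂(gaussianReal 0 1))) := by
  have hp0 : 0 < p := hp.1
  have hp1 : p < 1 := hp.2
  have hpq : 0 < p * (1 - p) := by nlinarith
  -- basic positivity
  have hRnn : ∀ k, 0 ≤ R k := fun k => by
    rw [hR]; exact Finset.sum_nonneg fun j _ => sq_nonneg _
  have hσnn : ∀ k, 0 ≤ σtrim k := fun k => by rw [hσtrim]; exact Real.sqrt_nonneg _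
  have hσsq : ∀ k, (σtrim k) ^ 2 = p * (1 - p) * R k := fun k => by
    rw [hσtrim, Real.sq_sqrt (mul_nonneg hpq.le (hRnn k))]
  -- eventual regime
  have hev : ∀ᶠ k in atTop, 1 ≤ k ∧ 0 < R k := by
    have h1 : ∀ᶠ k in atTop, (1 : ℝ) ≤ p * (1 - p) * R k := hvar.eventually_ge_atTop 1
    have h2 : ∀ᶠ k in atTop, 1 ≤ k := eventually_ge_atTop 1
    filter_upwards [h1, h2] with k hk1 hk2
    refine ⟨hk2, ?_⟩
    nlinarith
  -- the weights
  set c : ℕ → ℕ → ℝ := fun k j => (y j : ℝ) / σtrim k with hc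
  set w : ℕ → ℕ → ℝ≥0 := fun k j => Real.toNNReal (p * (1 - p) * (c k j) ^ 2) with hw
  set W : ℕ → ℝ≥0 := fun k => ∑ j ∈ Finset.range k, w k j with hW
  have hwcoe : ∀ k j, ((w k j : ℝ≥0) : ℝ) = p * (1 - p) * (c k j) ^ 2 := fun k j => by
    rw [hw]; exact Real.coe_toNNReal _ (mul_nonneg hpq.le (sq_nonneg _))
  have hWcoe : ∀ k, ((W k : ℝ≥0) : ℝ) = p * (1 - p) * ∑ j ∈ Finset.range k, (c k j) ^ 2 := by
    intro k
    rw [hW, NNReal.coe_sum, Finset.mul_sum]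
    exact Finset.sum_congr rfl fun j _ => hwcoe k j
  -- sum of squares decomposition
  have hsum_split : ∀ k, 1 ≤ k → (∑ j ∈ Finset.range k, (y j : ℝ) ^ 2)
      = (y (jk k) : ℝ) ^ 2 + R k := by
    intro k hk
    rw [hR]
    exact (Finset.add_sum_erase _ _ (hjk_mem k hk)).symm
  have hWev : ∀ᶠ k in atTop, ((W k : ℝ≥0) : ℝ) = 1 + (y (jk k) : ℝ) ^ 2 / R k := by
    filter_upwards [hev] with k hk
    rw [hWcoe]
    have hσpos : 0 < σtrim k := by
      rw [hσtrim]; apply Real.sqrt_pos.mpr; nlinarith [hk.2]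
    have : ∑ j ∈ Finset.range k, (c k j) ^ 2
        = (∑ j ∈ Finset.range k, (y j : ℝ) ^ 2) / (σtrim k) ^ 2 := by
      rw [Finset.sum_div]
      exact Finset.sum_congr rfl fun j _ => by rw [hc, div_pow]
    rw [this, hsum_split k hk.1, hσsq k]
    have hRne : R k ≠ 0 := ne_of_gt hk.2
    have hpqne : p * (1 - p) ≠ 0 := ne_of_gt hpq
    have h1p : 1 - p ≠ 0 := (by linarith [hp.2] : (0:ℝ) < 1 - p).ne'
    field_simp
    ring
  have hWlim : Tendsto (fun k => ((W k : ℝ≥0) : ℝ)) atTop (nhds 1) := by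
    have h := (tendsto_const_nhds (x := (1:ℝ))).add hremoved
    rw [add_zero] at h
    exact Tendsto.congr' (by filter_upwards [hWev] with k hk; rw [hk]) h
  -- the removed max ratio
  set cmax : ℕ → ℝ := fun k => (y (jk k) : ℝ) / σtrim k with hcmax
  have hcmaxlim : Tendsto cmax atTop (nhds 0) := by
    have hm : Tendsto (fun k => (y (jk k) : ℝ) ^ 2 / (p * (1 - p) * R k)) atTop (nhds 0) := by
      have h := hremoved.const_mul (1 / (p * (1 - p)))
      rw [mul_zero] at h
      apply h.congr
      intro k
      rw [one_div, mul_comm (p * (1 - p)) (R k), ← div_div,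
        div_eq_mul_inv ((y (jk k) : ℝ) ^ 2 / R k), mul_comm]
    have hsq := (Real.continuous_sqrt.tendsto 0).comp hm
    rw [Real.sqrt_zero] at hsq
    apply hsq.congr
    intro k
    simp only [Function.comp_apply, hcmax, hσtrim]
    rw [Real.sqrt_div (sq_nonneg _), Real.sqrt_sq (Nat.cast_nonneg _)]
  -- c bounded by cmax in regime
  have hcle : ∀ k, 0 < σtrim k → ∀ j ∈ Finset.range k, c k j ≤ cmax k := by
    intro k hσpos j hj
    have h2 := hjk_max k j hj
    have hyle : (y j : ℝ) ≤ (y (jk k) : ℝ) := by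
      nlinarith [(Nat.cast_nonneg (y j) : (0:ℝ) ≤ (y j : ℝ)),
        (Nat.cast_nonneg (y (jk k)) : (0:ℝ) ≤ (y (jk k) : ℝ))]
    rw [hc, hcmax]
    exact (div_le_div_iff_of_pos_right hσpos).mpr hyle
  have hcnn : ∀ k j, 0 ≤ c k j := fun k j => div_nonneg (Nat.cast_nonneg _) (hσnn k)
  -- the intermediate Gaussian integrals
  set ψ : ℕ → ℝ := fun k => ∫ x, f x ∂gaussianReal 0 (W k) with hψ
  set φ : ℕ → ℝ := fun k => ∫ ω, f ((S k ω - μk k) / σtrim k) ∂μ with hφ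
  -- main estimate
  have hmain : ∀ᶠ k in atTop, |φ k - ψ k|
      ≤ M * ((1 + C3) * cmax k * (((W k : ℝ≥0) : ℝ) / (p * (1 - p)))) := by
    filter_upwards [hev] with k hk
    obtain ⟨hk1, hkR⟩ := hk
    have hσpos : 0 < σtrim k := by
      rw [hσtrim]; apply Real.sqrt_pos.mpr; nlinarith
    set gk : ℕ → Ω → ℝ := fun j => (fun x : ℝ => (x - p) * c k j) ∘ ε j with hgk
    have hgmeas : ∀ j, Measurable (gk j) := fun j =>
      (((measurable_id.sub measurable_const).mul_const _).comp (hmeas j))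
    have hgind : iIndepFun gk μ :=
      hindep.comp (fun j (x : ℝ) => (x - p) * c k j) (fun j => by fun_prop)
    set ν : Fin k → Measure ℝ := fun j => μ.map (gk (j : ℕ)) with hν
    haveI hνprob : ∀ j, IsProbabilityMeasure (ν j) :=
      fun j => Measure.isProbabilityMeasure_map (hgmeas _).aemeasurable
    set ρ : Fin k → Measure ℝ := fun j => gaussianReal 0 (w k (j : ℕ)) with hρ
    haveI hρprob : ∀ j, IsProbabilityMeasure (ρ j) := fun j => by
      rw [hρ]; infer_instance
    have hbm := fun (j : ℕ) (F : ℝ → ℝ) (hF : Measurable F) =>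
      bern_int (μ := μ) hp hmeas h01 hbern j F hF
    -- moment identities for ν
    have hmap_int : ∀ (j : Fin k) (F : ℝ → ℝ), Measurable F →
        (∫ x, F x ∂ν j) = ∫ ω, F (gk (j : ℕ) ω) ∂μ := by
      intro j F hF
      rw [hν]
      exact integral_map (hgmeas _).aemeasurable hF.aestronglyMeasurable
    have m1ν : ∀ j : Fin k, (∫ x, x ∂ν j) = 0 := by
      intro j
      rw [hmap_int j (fun x => x) measurable_id]
      have h := (hbm (j : ℕ) (fun x => (x - p) * c k (j : ℕ)) (by fun_prop)).2
      rw [hgk]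
      simp only [Function.comp_apply]
      rw [h]; ring
    have m2ν : ∀ j : Fin k, (∫ x, x ^ 2 ∂ν j) = p * (1 - p) * (c k (j : ℕ)) ^ 2 := by
      intro j
      rw [hmap_int j _ (by fun_prop)]
      have h := (hbm (j : ℕ) (fun x => ((x - p) * c k (j : ℕ)) ^ 2) (by fun_prop)).2
      rw [hgk]
      simp only [Function.comp_apply]
      rw [h]; ring
    have m3ν : ∀ j : Fin k, (∫ x, |x| ^ 3 ∂ν j)
        = p * ((1 - p) * c k (j : ℕ)) ^ 3 + (1 - p) * (p * c k (j : ℕ)) ^ 3 := by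
      intro j
      rw [hmap_int j _ (by fun_prop)]
      have h := (hbm (j : ℕ) (fun x => |(x - p) * c k (j : ℕ)| ^ 3) (by fun_prop)).2
      rw [hgk]
      simp only [Function.comp_apply]
      rw [h]
      have e1 : |(1 - p) * c k (j : ℕ)| = (1 - p) * c k (j : ℕ) :=
        abs_of_nonneg (mul_nonneg (by linarith) (hcnn k _))
      have e0 : |(0 - p) * c k (j : ℕ)| = p * c k (j : ℕ) := by
        rw [zero_sub, neg_mul, abs_neg]
        exact abs_of_nonneg (mul_nonneg hp0.le (hcnn k _))
      rw [e1, e0]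
    have i3ν : ∀ j : Fin k, Integrable (fun x => |x| ^ 3) (ν j) := by
      intro j
      rw [hν]
      refine (integrable_map_measure ((continuous_abs.pow 3).aestronglyMeasurable) (hgmeas _).aemeasurable).mpr ?_
      exact (hbm (j : ℕ) (fun x => |(x - p) * c k (j : ℕ)| ^ 3) (by fun_prop)).1
    -- moment identities for ρ
    have m1ρ : ∀ j : Fin k, (∫ x, x ∂ρ j) = 0 := fun j => gauss_m1 _
    have m2ρ : ∀ j : Fin k, (∫ x, x ^ 2 ∂ρ j) = p * (1 - p) * (c k (j : ℕ)) ^ 2 := by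
      intro j
      rw [hρ, gauss_m2, hwcoe]
    have i3ρ : ∀ j : Fin k, Integrable (fun x => |x| ^ 3) (ρ j) := fun j => gauss_i3 _
    -- the replacement bound
    have hlin := lindeberg_pi k ν ρ hνprob hρprob i3ν i3ρ
      (fun j => by rw [m1ν j, m1ρ j]) (fun j => by rw [m2ν j, m2ρ j]) hf
    -- identify the two integrals
    have hV : Measurable (fun ω (j : Fin k) => gk (j : ℕ) ω) :=
      measurable_pi_lambda _ (fun j => hgmeas _)
    have hφk : φ k = ∫ x, f (∑ i, x i) ∂Measure.pi ν := by
      rw [hφ, hν]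
      simp only
      rw [← law_pi gk hgmeas hgind k,
        integral_map hV.aemeasurable
          (show AEStronglyMeasurable (fun x : Fin k → ℝ => f (∑ i, x i))
              (Measure.map (fun ω (j : Fin k) => gk (j : ℕ) ω) μ) from
            (hf.cont.comp continuous_pi_sum).aestronglyMeasurable)]
      apply integral_congr_ae
      filter_upwards with ω
      congr 1
      rw [Fin.sum_univ_eq_sum_range (fun j => gk j ω) k, hS, hμk, Finset.mul_sum,
        ← Finset.sum_sub_distrib, Finset.sum_div]
      apply Finset.sum_congr rfl
      intro j _
      rw [hgk]
      simp only [Function.comp_apply, hc]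
      have hσne : σtrim k ≠ 0 := ne_of_gt hσpos
      field_simp
    have hψk : ψ k = ∫ x, f (∑ i, x i) ∂Measure.pi ρ := by
      have hWfin : W k = ∑ i : Fin k, w k (i : ℕ) := by
        rw [hW, Fin.sum_univ_eq_sum_range (fun j => w k j) k]
      rw [hψ, hρ]
      simp only
      rw [hWfin, ← pi_gauss_sum k (fun i => w k (i : ℕ)),
        integral_map continuous_pi_sum.measurable.aemeasurable hf.cont.aestronglyMeasurable]
    rw [hφk, hψk]
    refine le_trans hlin ?_
    have hterm : ∀ j : Fin k, (∫ x, |x| ^ 3 ∂ν j) + (∫ x, |x| ^ 3 ∂ρ j)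
        ≤ (1 + C3) * cmax k * (c k (j : ℕ)) ^ 2 := by
      intro j
      have hcj : c k (j : ℕ) ≤ cmax k := hcle k hσpos (j : ℕ) (Finset.mem_range.mpr j.isLt)
      have hcjn : 0 ≤ c k (j : ℕ) := hcnn k _
      have hb1 : (∫ x, |x| ^ 3 ∂ν j) ≤ cmax k * (c k (j : ℕ)) ^ 2 := by
        rw [m3ν j]
        have h1 : p * ((1 - p) * c k (j : ℕ)) ^ 3 + (1 - p) * (p * c k (j : ℕ)) ^ 3
            = (p * (1 - p) * ((1 - p) ^ 2 + p ^ 2)) * (c k (j : ℕ)) ^ 3 := by ring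
        have h2 : p * (1 - p) * ((1 - p) ^ 2 + p ^ 2) ≤ 1 := by nlinarith
        have h3 : (c k (j : ℕ)) ^ 3 ≤ cmax k * (c k (j : ℕ)) ^ 2 := by
          have := mul_le_mul_of_nonneg_right hcj (sq_nonneg (c k (j : ℕ)))
          calc (c k (j : ℕ)) ^ 3 = c k (j : ℕ) * (c k (j : ℕ)) ^ 2 := by ring
            _ ≤ cmax k * (c k (j : ℕ)) ^ 2 := this
        calc p * ((1 - p) * c k (j : ℕ)) ^ 3 + (1 - p) * (p * c k (j : ℕ)) ^ 3
            = (p * (1 - p) * ((1 - p) ^ 2 + p ^ 2)) * (c k (j : ℕ)) ^ 3 := h1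
          _ ≤ 1 * (c k (j : ℕ)) ^ 3 :=
              mul_le_mul_of_nonneg_right h2 (pow_nonneg hcjn 3)
          _ = (c k (j : ℕ)) ^ 3 := one_mul _
          _ ≤ cmax k * (c k (j : ℕ)) ^ 2 := h3
      have hb2 : (∫ x, |x| ^ 3 ∂ρ j) ≤ C3 * (cmax k * (c k (j : ℕ)) ^ 2) := by
        rw [hρ]
        simp only
        rw [gauss_m3, hwcoe]
        have hsle : √(p * (1 - p) * (c k (j : ℕ)) ^ 2) ≤ c k (j : ℕ) := by
          rw [show p * (1 - p) * (c k (j : ℕ)) ^ 2 = (p * (1-p)) * (c k (j:ℕ))^2 by ring]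
          have hpq1 : p * (1 - p) ≤ 1 := by nlinarith
          calc √(p * (1 - p) * (c k (j : ℕ)) ^ 2) ≤ √((c k (j : ℕ)) ^ 2) := by
                apply Real.sqrt_le_sqrt
                nlinarith [mul_nonneg (by linarith : (0:ℝ) ≤ 1 - p * (1 - p))
                  (sq_nonneg (c k (j : ℕ)))]
            _ = c k (j : ℕ) := Real.sqrt_sq hcjn
        have hsnn : 0 ≤ √(p * (1 - p) * (c k (j : ℕ)) ^ 2) := Real.sqrt_nonneg _
        have hpow : (√(p * (1 - p) * (c k (j : ℕ)) ^ 2)) ^ 3 ≤ cmax k * (c k (j : ℕ)) ^ 2 := by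
          calc (√(p * (1 - p) * (c k (j : ℕ)) ^ 2)) ^ 3 ≤ (c k (j : ℕ)) ^ 3 :=
                pow_le_pow_left₀ hsnn hsle 3
            _ = (c k (j : ℕ)) * (c k (j : ℕ)) ^ 2 := by ring
            _ ≤ cmax k * (c k (j : ℕ)) ^ 2 := by nlinarith [sq_nonneg (c k (j:ℕ))]
        calc (√(p * (1 - p) * (c k (j : ℕ)) ^ 2)) ^ 3 * C3
            ≤ (cmax k * (c k (j : ℕ)) ^ 2) * C3 :=
              mul_le_mul_of_nonneg_right hpow C3_nonneg
          _ = C3 * (cmax k * (c k (j : ℕ)) ^ 2) := by ring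
      calc (∫ x, |x| ^ 3 ∂ν j) + (∫ x, |x| ^ 3 ∂ρ j)
          ≤ cmax k * (c k (j : ℕ)) ^ 2 + C3 * (cmax k * (c k (j : ℕ)) ^ 2) := add_le_add hb1 hb2
        _ = (1 + C3) * cmax k * (c k (j : ℕ)) ^ 2 := by ring
    calc M * ∑ i : Fin k, ((∫ x, |x| ^ 3 ∂ν i) + ∫ x, |x| ^ 3 ∂ρ i)
        ≤ M * ∑ i : Fin k, (1 + C3) * cmax k * (c k (i : ℕ)) ^ 2 := by
          apply mul_le_mul_of_nonneg_left _ hf.hM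
          exact Finset.sum_le_sum fun i _ => hterm i
      _ = M * ((1 + C3) * cmax k * (((W k : ℝ≥0) : ℝ) / (p * (1 - p)))) := by
          rw [← Finset.mul_sum, Fin.sum_univ_eq_sum_range (fun j => (c k j) ^ 2) k]
          have : (((W k : ℝ≥0) : ℝ) / (p * (1 - p))) = ∑ j ∈ Finset.range k, (c k j) ^ 2 := by
            rw [hWcoe, mul_comm, mul_div_assoc, div_self (ne_of_gt hpq), mul_one]
          rw [this]
  -- limit of ψ
  have hψlim : Tendsto ψ atTop (nhds (∫ x, f x ∂gaussianReal 0 1)) := by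
    have heq : ∀ kk : ℕ, ψ kk = ∫ x, f (√((W kk : ℝ≥0) : ℝ) * x) ∂gaussianReal 0 1 := by
      intro kk
      rw [hψ]
      exact gauss_integral_scale (W kk) hf.cont.measurable
    have hlim : Tendsto (fun kk => ∫ x, f (√((W kk : ℝ≥0) : ℝ) * x) ∂gaussianReal 0 1) atTop
        (nhds (∫ x, f x ∂gaussianReal 0 1)) := by
      apply tendsto_integral_filter_of_dominated_convergence (bound := fun _ => B)
      · exact Filter.Eventually.of_forall fun kk =>
          (hf.cont.comp (continuous_const.mul continuous_id)).aestronglyMeasurable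
      · exact Filter.Eventually.of_forall fun kk =>
          Filter.Eventually.of_forall fun x => by
            simpa [Real.norm_eq_abs] using hf.bdd _
      · exact integrable_const B
      · refine Filter.Eventually.of_forall fun x => ?_
        have hs : Tendsto (fun kk => √((W kk : ℝ≥0) : ℝ) * x) atTop (nhds x) := by
          have h1 : Tendsto (fun kk => √((W kk : ℝ≥0) : ℝ)) atTop (nhds 1) := by
            have := (Real.continuous_sqrt.tendsto 1).comp hWlim
            rwa [Real.sqrt_one] at this
          have := h1.mul_const x
          rw [one_mul] at this
          exact this
        exact (hf.cont.tendsto x).comp hs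
    exact hlim.congr (fun kk => (heq kk).symm)
  -- the error bound tends to zero
  have hElim : Tendsto (fun k => M * ((1 + C3) * cmax k * (((W k : ℝ≥0) : ℝ) / (p * (1 - p)))))
      atTop (nhds 0) := by
    have h1 : Tendsto (fun k => (1 + C3) * cmax k) atTop (nhds 0) := by
      have := hcmaxlim.const_mul (1 + C3)
      rwa [mul_zero] at this
    have h2 : Tendsto (fun k => ((W k : ℝ≥0) : ℝ) / (p * (1 - p))) atTop
        (nhds (1 / (p * (1 - p)))) := hWlim.div_const _
    have h3 := (h1.mul h2).const_mul M
    rw [zero_mul, mul_zero] at h3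
    apply h3.congr
    intro k; ring
  -- conclude by squeezing
  have hdiff : Tendsto (fun k => φ k - ψ k) atTop (nhds 0) := by
    apply tendsto_of_tendsto_of_tendsto_of_le_of_le' (g := fun k =>
        -(M * ((1 + C3) * cmax k * (((W k : ℝ≥0) : ℝ) / (p * (1 - p))))))
      (h := fun k => M * ((1 + C3) * cmax k * (((W k : ℝ≥0) : ℝ) / (p * (1 - p)))))
    · simpa using hElim.neg
    · exact hElim
    · filter_upwards [hmain] with k hk
      have := abs_le.mp hk
      linarith [this.1]
    · filter_upwards [hmain] with k hk
      exact (abs_le.mp hk).2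
  have := hdiff.add hψlim
  rw [zero_add] at this
  apply this.congr
  intro k
  rw [hφ, hψ]
  ring

end Key

section Urysohn

/-- A smooth compactly supported Urysohn function together with TLike data. -/
lemma exists_tlike_urysohn {K G : Set ℝ} (hK : IsCompact K) (hG : IsOpen G) (hKG : K ⊆ G) :
    ∃ (M B : ℝ) (h h₁ h₂ : ℝ → ℝ), TLike M B h h₁ h₂ ∧ (∀ x, 0 ≤ h x) ∧ (∀ x, h x ≤ 1)
      ∧ (∀ x ∈ K, h x = 1) ∧ (∀ x ∉ G, h x = 0) := by
  obtain ⟨δ, hδpos, hδ⟩ := hK.exists_thickening_subset_open hG hKG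
  set U : Set ℝ := Metric.thickening (δ / 2) K with hU
  have hUopen : IsOpen U := Metric.isOpen_thickening
  have hKU : K ⊆ U := Metric.self_subset_thickening (by linarith) K
  have hUG : closure U ⊆ G := by
    refine subset_trans ?_ hδ
    refine subset_trans (Metric.closure_thickening_subset_cthickening _ _) ?_
    exact Metric.cthickening_subset_thickening' hδpos (by linarith) K
  obtain ⟨h, hh0, hh1, hh01⟩ := exists_contMDiffMap_zero_one_of_isClosed (n := ⊤) (modelWithCornersSelf ℝ ℝ)
    hUopen.isClosed_compl (hK.isClosed) (by
      rw [Set.disjoint_compl_left_iff_subset]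
      exact hKU)
  have hcd : ContDiff ℝ ((⊤ : ℕ∞) : WithTop ℕ∞) ⇑h := contMDiff_iff_contDiff.mp h.contMDiff
  have hsupp : HasCompactSupport (⇑h) := by
    have hsub : Function.support (⇑h) ⊆ U := by
      intro x hx
      by_contra hxU
      exact hx (hh0 hxU)
    have h2 : tsupport (⇑h) ⊆ Metric.cthickening (δ / 2) K := by
      refine subset_trans (closure_mono hsub) ?_
      exact Metric.closure_thickening_subset_cthickening _ _
    exact IsCompact.of_isClosed_subset (hK.cthickening) (isClosed_tsupport _) h2
  -- derivatives
  set h1 : ℝ → ℝ := deriv h with hh1d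
  set h2 : ℝ → ℝ := deriv h1 with hh2d
  set h3 : ℝ → ℝ := deriv h2 with hh3d
  have hcd1 : ContDiff ℝ ((⊤ : ℕ∞) : WithTop ℕ∞) h1 := by
    have := hcd.iterate_deriv 1
    simpa using this
  have hcd2 : ContDiff ℝ ((⊤ : ℕ∞) : WithTop ℕ∞) h2 := by
    have := hcd.iterate_deriv 2
    simpa [Function.iterate_succ, hh1d, hh2d] using this
  have hcd3 : ContDiff ℝ ((⊤ : ℕ∞) : WithTop ℕ∞) h3 := by
    have := hcd.iterate_deriv 3
    simpa [Function.iterate_succ, hh1d, hh2d, hh3d] using this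
  have hs1 : HasCompactSupport h1 := hsupp.deriv
  have hs2 : HasCompactSupport h2 := hs1.deriv
  have hs3 : HasCompactSupport h3 := hs2.deriv
  obtain ⟨B0, hB0⟩ := hcd.continuous.bounded_above_of_compact_support hsupp
  obtain ⟨B1, hB1⟩ := hcd1.continuous.bounded_above_of_compact_support hs1
  obtain ⟨B2, hB2⟩ := hcd2.continuous.bounded_above_of_compact_support hs2
  obtain ⟨B3, hB3⟩ := hcd3.continuous.bounded_above_of_compact_support hs3
  have hB3' : 0 ≤ B3 := le_trans (norm_nonneg _) (hB3 0)
  set B : ℝ := max B0 (max B1 B2) with hB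
  have hone : ((⊤ : ℕ∞) : WithTop ℕ∞) ≠ 0 := by
    simp
  have hd1 : ∀ x, HasDerivAt (⇑h) (h1 x) x :=
    fun x => (hcd.differentiable hone x).hasDerivAt
  have hd2 : ∀ x, HasDerivAt h1 (h2 x) x :=
    fun x => (hcd1.differentiable hone x).hasDerivAt
  have hd3 : ∀ x, HasDerivAt h2 (h3 x) x :=
    fun x => (hcd2.differentiable hone x).hasDerivAt
  refine ⟨B3, B, h, h1, h2,
    ⟨hB3', hcd.continuous, hcd1.continuous, hcd2.continuous,
      fun x => le_trans (by simpa [Real.norm_eq_abs] using hB0 x) (le_max_left _ _),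
      fun x => le_trans (by simpa [Real.norm_eq_abs] using hB1 x)
        (le_trans (le_max_left _ _) (le_max_right _ _)),
      fun x => le_trans (by simpa [Real.norm_eq_abs] using hB2 x)
        (le_trans (le_max_right _ _) (le_max_right _ _)),
      taylor3 hd1 hd2 hd3 (fun x => by simpa [Real.norm_eq_abs] using hB3 x)⟩,
    fun x => (hh01 x).1, fun x => (hh01 x).2, fun x hx => hh1 hx, ?_⟩
  intro x hx
  have : x ∈ Uᶜ := fun hxU => hx (hUG (subset_closure hxU))
  exact hh0 this

end Urysohn

end RCLT

/-- **Reinsertion of the removed summand.** If `p(1−p)·R_k → ∞`,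
`max_{j≤k, j≠j_k} y_j² / R_k → 0`, and additionally `y_{j_k}² / R_k → 0`, then the full
centered sums with the trimmed normalization, `(S_k − μ_k)/σ_k^trim`, converge in
distribution to `N(0,1)`. Convergence in distribution is expressed via bounded
continuous test functions. -/
theorem reinsertion_clt {Ω : Type*} [MeasurableSpace Ω]
    (μ : Measure Ω) [IsProbabilityMeasure μ]
    (p : ℝ) (hp : p ∈ Set.Ioo (0 : ℝ) 1)
    (ε : ℕ → Ω → ℝ) (hmeas : ∀ j, Measurable (ε j))
    (hindep : iIndepFun ε μ)
    (h01 : ∀ j ω, ε j ω = 0 ∨ ε j ω = 1)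
    (hbern : ∀ j, μ {ω | ε j ω = 1} = ENNReal.ofReal p)
    (y : ℕ → ℕ) (hyinj : Function.Injective y) (hypos : ∀ j, 0 < y j)
    (jk : ℕ → ℕ) (hjk_mem : ∀ k, 1 ≤ k → jk k ∈ Finset.range k)
    (hjk_max : ∀ k, ∀ j ∈ Finset.range k, (y j : ℝ) ^ 2 ≤ (y (jk k) : ℝ) ^ 2)
    (S : ℕ → Ω → ℝ) (hS : ∀ k ω, S k ω = ∑ j ∈ Finset.range k, ε j ω * (y j : ℝ))
    (μk : ℕ → ℝ) (hμk : ∀ k, μk k = p * ∑ j ∈ Finset.range k, (y j : ℝ))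
    (R : ℕ → ℝ) (hR : ∀ k, R k = ∑ j ∈ (Finset.range k).erase (jk k), (y j : ℝ) ^ 2)
    (σtrim : ℕ → ℝ) (hσtrim : ∀ k, σtrim k = Real.sqrt (p * (1 - p) * R k))
    (hvar : Tendsto (fun k => p * (1 - p) * R k) atTop atTop)
    (hmax : Tendsto
      (fun k => ((((Finset.range k).erase (jk k)).sup fun j => y j ^ 2 : ℕ) : ℝ) / R k)
      atTop (nhds 0))
    (hremoved : Tendsto (fun k => (y (jk k) : ℝ) ^ 2 / R k) atTop (nhds 0)) :
    ∀ f : BoundedContinuousFunction ℝ ℝ,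
      Tendsto (fun k => ∫ ω, f ((S k ω - μk k) / σtrim k) ∂μ) atTop
        (nhds (∫ x, f x ∂(gaussianReal 0 1))) := by
  classical
  have hXmeas : ∀ k, Measurable (fun ω => (S k ω - μk k) / σtrim k) := by
    intro k
    have hSk : Measurable (S k) := by
      have hfe : S k = fun ω => ∑ j ∈ Finset.range k, ε j ω * (y j : ℝ) := funext (hS k)
      rw [hfe]
      exact Finset.measurable_sum _ (fun j _ => (hmeas j).mul_const _)
    exact (hSk.sub measurable_const).div_const _
  haveI hprob : ∀ k, IsProbabilityMeasure (μ.map (fun ω => (S k ω - μk k) / σtrim k)) :=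
    fun k => Measure.isProbabilityMeasure_map (hXmeas k).aemeasurable
  set Λ : ℕ → ProbabilityMeasure ℝ := fun k =>
    ⟨μ.map (fun ω => (S k ω - μk k) / σtrim k), hprob k⟩ with hΛ
  set γP : ProbabilityMeasure ℝ := ⟨gaussianReal 0 1, inferInstance⟩ with hγP
  have hkey : ∀ {M B : ℝ} {g g₁ g₂ : ℝ → ℝ}, RCLT.TLike M B g g₁ g₂ →
      Tendsto (fun k => ∫ x, g x ∂((Λ k : Measure ℝ))) atTop
        (nhds (∫ x, g x ∂(gaussianReal 0 1))) := by
    intro M B g g₁ g₂ hg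
    have hk := RCLT.key_tendsto μ p hp ε hmeas hindep h01 hbern y hypos jk hjk_mem hjk_max
      S hS μk hμk R hR σtrim hσtrim hvar hremoved hg
    apply hk.congr
    intro k
    exact (integral_map (hXmeas k).aemeasurable hg.cont.aestronglyMeasurable).symm
  have hopen : ∀ G : Set ℝ, IsOpen G → γP G ≤ liminf (fun i => Λ i G) atTop := by
    intro G hG
    apply le_of_forall_lt
    intro r hr
    obtain ⟨r', hrr', hr'G⟩ := exists_between hr
    have hle : r' ≤ liminf (fun i => Λ i G) atTop := by
      have hne : (gaussianReal 0 1) G ≠ ⊤ := measure_ne_top _ _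
      have hGW : (r' : ℝ≥0∞) < (gaussianReal 0 1) G := by
        have h1 := ENNReal.coe_lt_coe.mpr hr'G
        rw [ProbabilityMeasure.ennreal_coeFn_eq_coeFn_toMeasure] at h1
        exact h1
      have hεne : (gaussianReal 0 1) G - (r' : ℝ≥0∞) ≠ 0 := by
        intro h0
        exact absurd (tsub_eq_zero_iff_le.mp h0) (not_le.mpr hGW)
      obtain ⟨K, hKG, hKcomp, hKlt⟩ := hG.measurableSet.exists_isCompact_lt_add hne hεne
      have hKr : (r' : ℝ≥0∞) < (gaussianReal 0 1) K := by
        by_contra hcon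
        push_neg at hcon
        have h1 : (gaussianReal 0 1) K + ((gaussianReal 0 1) G - (r' : ℝ≥0∞))
            ≤ (r' : ℝ≥0∞) + ((gaussianReal 0 1) G - (r' : ℝ≥0∞)) := add_le_add_left hcon _
        rw [add_tsub_cancel_of_le hGW.le] at h1
        exact absurd (lt_of_lt_of_le hKlt h1) (lt_irrefl _)
      obtain ⟨M, B, h, h1, h2, hT, hh0, hh1, hhK, hhG⟩ :=
        RCLT.exists_tlike_urysohn hKcomp hG hKG
      have hKmeas : MeasurableSet K := hKcomp.isClosed.measurableSet
      have hint_γ : Integrable h (gaussianReal 0 1) :=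
        RCLT.integrable_of_bdd hT.cont.aestronglyMeasurable hT.bdd
      have hlow : (r' : ℝ) < ∫ x, h x ∂(gaussianReal 0 1) := by
        have hind : (∫ x, K.indicator (fun _ => (1 : ℝ)) x ∂(gaussianReal 0 1))
            = ((gaussianReal 0 1) K).toReal := by
          rw [integral_indicator_const _ hKmeas, smul_eq_mul, mul_one, measureReal_def]
        have hmono : (∫ x, K.indicator (fun _ => (1 : ℝ)) x ∂(gaussianReal 0 1))
            ≤ ∫ x, h x ∂(gaussianReal 0 1) := by
          apply integral_mono ((integrable_const (1 : ℝ)).indicator hKmeas) hint_γ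
          intro x
          by_cases hx : x ∈ K
          · simp [Set.indicator_of_mem hx, hhK x hx]
          · simp [Set.indicator_of_notMem hx, hh0 x]
        have htr : (r' : ℝ) < ((gaussianReal 0 1) K).toReal := by
          rw [show (r' : ℝ) = ((r' : ℝ≥0∞)).toReal by simp]
          exact ENNReal.toReal_lt_toReal (by simp) (measure_ne_top _ _) |>.mpr hKr
        linarith [hind ▸ hmono]
      have hev : ∀ᶠ k in atTop, (r' : ℝ) < ∫ x, h x ∂((Λ k : Measure ℝ)) :=
        (hkey hT).eventually (eventually_gt_nhds hlow)
      have hev2 : ∀ᶠ k in atTop, r' ≤ Λ k G := by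
        filter_upwards [hev] with k hk
        have hint_k : Integrable h ((Λ k : Measure ℝ)) :=
          RCLT.integrable_of_bdd hT.cont.aestronglyMeasurable hT.bdd
        have hup : (∫ x, h x ∂((Λ k : Measure ℝ)))
            ≤ ((Λ k : Measure ℝ) G).toReal := by
          have hind : (∫ x, G.indicator (fun _ => (1 : ℝ)) x ∂((Λ k : Measure ℝ)))
              = ((Λ k : Measure ℝ) G).toReal := by
            rw [integral_indicator_const _ hG.measurableSet, smul_eq_mul, mul_one, measureReal_def]
          rw [← hind]
          apply integral_mono hint_k ((integrable_const (1 : ℝ)).indicator hG.measurableSet)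
          intro x
          by_cases hx : x ∈ G
          · simp [Set.indicator_of_mem hx, hh1 x]
          · simp [Set.indicator_of_notMem hx, le_of_eq (hhG x hx)]
        have hlt : (r' : ℝ) < ((Λ k : Measure ℝ) G).toReal := lt_of_lt_of_le hk hup
        have hfin : (Λ k : Measure ℝ) G ≠ ⊤ := measure_ne_top _ _
        rw [← ENNReal.coe_le_coe, ProbabilityMeasure.ennreal_coeFn_eq_coeFn_toMeasure]
        refine (ENNReal.toReal_le_toReal (by simp) hfin).mp ?_
        rw [ENNReal.coe_toReal]
        exact hlt.le
      have hcob : Filter.IsCoboundedUnder (· ≥ ·) atTop (fun i => Λ i G) := by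
        refine ⟨1, fun a ha => ?_⟩
        obtain ⟨k, hk⟩ := (Filter.eventually_map.mp ha).exists
        exact le_trans hk (ProbabilityMeasure.apply_le_one _ _)
      exact Filter.le_liminf_of_le hcob hev2
    exact lt_of_lt_of_le hrr' hle
  have hconv := MeasureTheory.tendsto_of_forall_isOpen_le_liminf hopen
  rw [ProbabilityMeasure.tendsto_iff_forall_integral_tendsto] at hconv
  intro f
  have hf := hconv f
  apply hf.congr
  intro k
  exact integral_map (hXmeas k).aemeasurable f.continuous.aestronglyMeasurable
end

section
/- Fix p ∈ (0,1), let A be a Bernoulli(p) random subset of ℕ, and fix an integer L ≥ 1. Then with probability 1, A contains infinitely many pairwise disjoint finite product sets of length L: almost surely there exists an infinite sequence of L-tuples (x^{(j)}_1 < ⋯ < x^{(j)}_L), j = 1, 2, …, such that the sets FP(x^{(j)}_1,…,x^{(j)}_L) are pairwise disjoint and each is contained in A. -/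
open MeasureTheory ProbabilityTheory

/-- Deterministic tuples whose FP sets are pairwise disjoint. -/
def yfun (L j : ℕ) : Fin L → ℕ := fun i => 2 ^ (2 ^ (L * j) * 2 ^ (i : ℕ))

lemma yfun_strictMono (L j : ℕ) : StrictMono (yfun L j) := by
  intro a b hab
  apply Nat.pow_lt_pow_right (by norm_num)
  exact (Nat.mul_lt_mul_left (by positivity)).2
    (Nat.pow_lt_pow_right (by norm_num) hab)

lemma sum_two_pow_lt (L : ℕ) : ∑ i ∈ Finset.range L, 2 ^ i < 2 ^ L := by
  induction L with
  | zero => simp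
  | succ n ih => rw [Finset.sum_range_succ, pow_succ]; omega

lemma mem_FP_yfun {L j s : ℕ} (hs : s ∈ FP (yfun L j)) :
    ∃ S, 1 ≤ S ∧ S < 2 ^ L ∧ s = 2 ^ (2 ^ (L * j) * S) := by
  obtain ⟨F, hF, rfl⟩ := hs
  refine ⟨∑ i ∈ F, 2 ^ (i : ℕ), ?_, ?_, ?_⟩
  · obtain ⟨i, hi⟩ := hF
    exact le_trans (Nat.one_le_two_pow)
      (Finset.single_le_sum (f := fun i : Fin L => 2 ^ (i : ℕ)) (fun _ _ => Nat.zero_le _) hi)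
  · calc ∑ i ∈ F, 2 ^ (i : ℕ) ≤ ∑ i : Fin L, 2 ^ (i : ℕ) :=
          Finset.sum_le_sum_of_subset (F.subset_univ)
      _ = ∑ i ∈ Finset.range L, 2 ^ i := Fin.sum_univ_eq_sum_range _ _
      _ < 2 ^ L := sum_two_pow_lt L
  · rw [Finset.mul_sum, ← Finset.prod_pow_eq_pow_sum]
    rfl

lemma FP_yfun_disjoint {L : ℕ} (hL : 1 ≤ L) {j j' : ℕ} (h : j < j') :
    Disjoint (FP (yfun L j)) (FP (yfun L j')) := by
  rw [Set.disjoint_left]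
  rintro s hs hs'
  obtain ⟨S, hS1, hS2, rfl⟩ := mem_FP_yfun hs
  obtain ⟨S', hS'1, _, heq⟩ := mem_FP_yfun hs'
  have hexp : 2 ^ (L * j) * S = 2 ^ (L * j') * S' :=
    Nat.pow_right_injective (le_refl 2) heq
  have h1 : 2 ^ (L * j) * S < 2 ^ (L * j + L) := by
    rw [pow_add]
    exact (Nat.mul_lt_mul_left (by positivity)).2 hS2
  have h2 : L * j + L ≤ L * j' := by
    have : L * (j + 1) ≤ L * j' := Nat.mul_le_mul_left L h
    simpa [Nat.mul_succ] using this
  have h3 : 2 ^ (L * j + L) ≤ 2 ^ (L * j') := Nat.pow_le_pow_right (by norm_num) h2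
  have h4 : 2 ^ (L * j') ≤ 2 ^ (L * j') * S' := Nat.le_mul_of_pos_right _ hS'1
  exact absurd hexp (Nat.ne_of_lt (lt_of_lt_of_le h1 (le_trans h3 (le_trans h4 (le_refl _)))))

/-- The finite product set as a `Finset`. -/
noncomputable def Fset (L j : ℕ) : Finset ℕ :=
  ((Finset.univ : Finset (Fin L)).powerset.filter Finset.Nonempty).image
    fun F => ∏ i ∈ F, yfun L j i

lemma coe_Fset (L j : ℕ) : (Fset L j : Set ℕ) = FP (yfun L j) := by
  ext s
  simp only [Fset, Finset.coe_image, Set.mem_image, Finset.mem_coe, Finset.mem_filter,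
    Finset.mem_powerset, FP, Set.mem_setOf_eq]
  constructor
  · rintro ⟨F, ⟨-, hne⟩, rfl⟩; exact ⟨F, hne, rfl⟩
  · rintro ⟨F, hne, rfl⟩; exact ⟨F, ⟨F.subset_univ, hne⟩, rfl⟩

lemma card_Fset_le (L j : ℕ) : (Fset L j).card ≤ 2 ^ L := by
  calc (Fset L j).card ≤ ((Finset.univ : Finset (Fin L)).powerset.filter Finset.Nonempty).card :=
        Finset.card_image_le
    _ ≤ (Finset.univ : Finset (Fin L)).powerset.card := Finset.card_filter_le _ _
    _ = 2 ^ L := by simp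

/-- For a Bernoulli(`p`) random subset `A(ω) = {n | ε n ω = true}` of `ℕ` and fixed
`L ≥ 1`, almost surely there is an infinite sequence of increasing `L`-tuples whose
finite product sets are pairwise disjoint and all contained in `A(ω)`. -/
theorem infinitely_many_disjoint_FP_sets {Ω : Type*} [MeasurableSpace Ω]
    (μ : Measure Ω) [IsProbabilityMeasure μ]
    (p : ℝ) (hp : p ∈ Set.Ioo (0 : ℝ) 1)
    (ε : ℕ → Ω → Bool) (hmeas : ∀ n, Measurable (ε n))
    (hindep : iIndepFun ε μ)
    (hbern : ∀ n, μ {ω | ε n ω = true} = ENNReal.ofReal p)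
    (L : ℕ) (hL : 1 ≤ L) :
    ∀ᵐ ω ∂μ, ∃ x : ℕ → (Fin L → ℕ),
      (∀ j, StrictMono (x j)) ∧
      (∀ j, FP (x j) ⊆ {n | ε n ω = true}) ∧
      Pairwise fun j j' => Disjoint (FP (x j)) (FP (x j')) := by
  set B : ℕ → Set Ω := fun n => ε n ⁻¹' {true} with hBdef
  have hB : ∀ n, μ (B n) = ENNReal.ofReal p := by
    intro n; rw [← hbern n]; rfl
  have hBmeas : ∀ n, MeasurableSet (B n) := fun n => (hmeas n) (by measurability)
  -- measure of intersections of basic events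
  have hprod : ∀ T : Finset ℕ, μ (⋂ n ∈ T, B n) = (ENNReal.ofReal p) ^ T.card := by
    intro T
    have := hindep.measure_inter_preimage_eq_mul T
      (sets := fun _ => ({true} : Set Bool)) (fun i _ => by measurability)
    rw [this]
    exact (Finset.prod_congr rfl (fun n _ => hB n)).trans (Finset.prod_const _)
  set E : ℕ → Set Ω := fun j => ⋂ n ∈ Fset L j, B n with hEdef
  have hEmeas : ∀ j, MeasurableSet (E j) :=
    fun j => MeasurableSet.biInter (Fset L j).countable_toSet fun n _ => hBmeas n
  have hE : ∀ j, μ (E j) = (ENNReal.ofReal p) ^ (Fset L j).card := fun j => hprod _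
  -- disjointness of the Fsets
  have hFdisj : ∀ {j j' : ℕ}, j ≠ j' → Disjoint (Fset L j) (Fset L j') := by
    intro j j' h
    rw [← Finset.disjoint_coe, coe_Fset, coe_Fset]
    rcases h.lt_or_gt with h | h
    · exact FP_yfun_disjoint hL h
    · exact (FP_yfun_disjoint hL h).symm
  -- independence of the events E
  have hiIndep : iIndepSet E μ := by
    rw [iIndepSet_iff_meas_biInter hEmeas]
    intro s
    have hset : ⋂ j ∈ s, E j = ⋂ n ∈ s.biUnion (Fset L), B n := by
      ext ω
      simp only [hEdef, Set.mem_iInter, Finset.mem_biUnion]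
      constructor
      · rintro h n ⟨j, hj, hn⟩; exact h j hj n hn
      · intro h j hj n hn; exact h n ⟨j, hj, hn⟩
    rw [hset, hprod, Finset.card_biUnion (fun j _ j' _ h => hFdisj h)]
    simp only [hE]
    rw [Finset.prod_pow_eq_pow_sum]
  -- divergence of the sum
  have htsum : ∑' j, μ (E j) = ⊤ := by
    have hc : (ENNReal.ofReal p) ^ (2 ^ L) ≠ 0 := by
      apply pow_ne_zero
      simp [ENNReal.ofReal_eq_zero, not_le, hp.1]
    have hle : ∀ j, (ENNReal.ofReal p) ^ (2 ^ L) ≤ μ (E j) := by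
      intro j
      rw [hE j]
      exact pow_le_pow_of_le_one zero_le
        (ENNReal.ofReal_le_one.2 hp.2.le) (card_Fset_le L j)
    refine top_le_iff.1 ?_
    calc (⊤ : ENNReal) = ∑' _ : ℕ, (ENNReal.ofReal p) ^ (2 ^ L) :=
          (ENNReal.tsum_const_eq_top_of_ne_zero hc).symm
      _ ≤ ∑' j, μ (E j) := ENNReal.tsum_le_tsum hle
  have hlimsup : μ (Filter.limsup E Filter.atTop) = 1 :=
    measure_limsup_eq_one hEmeas hiIndep htsum
  have hae : ∀ᵐ ω ∂μ, ω ∈ Filter.limsup E Filter.atTop := by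
    rw [MeasureTheory.ae_iff]
    have : {ω | ¬ ω ∈ Filter.limsup E Filter.atTop} = (Filter.limsup E Filter.atTop)ᶜ := rfl
    rw [this, measure_compl (MeasurableSet.measurableSet_limsup fun j => hEmeas j)
      (measure_ne_top μ _), hlimsup, measure_univ, tsub_self]
  filter_upwards [hae] with ω hω
  have hfreq : {j | ω ∈ E j}.Infinite := by
    rw [← Nat.frequently_atTop_iff_infinite]
    exact Filter.mem_limsup_iff_frequently_mem.1 hω
  refine ⟨fun k => yfun L (Nat.nth (fun j => ω ∈ E j) k), ?_, ?_, ?_⟩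
  · exact fun k => yfun_strictMono L _
  · intro k s hs
    have hmem : ω ∈ E (Nat.nth (fun j => ω ∈ E j) k) := Nat.nth_mem_of_infinite hfreq k
    rw [← coe_Fset] at hs
    have := Set.mem_iInter₂.1 hmem s hs
    simpa [hBdef] using this
  · intro k k' hkk'
    have hne : Nat.nth (fun j => ω ∈ E j) k ≠ Nat.nth (fun j => ω ∈ E j) k' :=
      fun h => hkk' ((Nat.nth_injective hfreq) h)
    rcases hne.lt_or_gt with h | h
    · exact FP_yfun_disjoint hL h
    · exact (FP_yfun_disjoint hL h).symm
end

section
/- Fix p ∈ (0,1) and let A be a Bernoulli(p) random subset of ℕ. Then with probability 1 the following holds: for every M > 0 and every integer L ≥ 1, there exist natural numbers x_1 < ⋯ < x_L such that FP(x_1,…,x_L) ⊆ A and every element of FP(x_1,…,x_L) is greater than M. -/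
open MeasureTheory ProbabilityTheory

/-- Auxiliary sequence of bases: grows so fast that the power blocks are disjoint. -/
def bseq (M N : ℕ) : ℕ → ℕ
  | 0 => M + 2
  | k + 1 => (bseq M N k) ^ N + 1

lemma le_bseq (M N : ℕ) (hN : 1 ≤ N) : ∀ k, M + 2 ≤ bseq M N k := by
  intro k
  induction k with
  | zero => simp [bseq]
  | succ k ih =>
    have h1 : bseq M N k ≤ bseq M N k ^ N := Nat.le_self_pow (by omega) _
    simp only [bseq]; omega

lemma two_le_bseq (M N : ℕ) (hN : 1 ≤ N) (k : ℕ) : 2 ≤ bseq M N k := by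
  have := le_bseq M N hN k; omega

lemma bseq_pow_lt (M N : ℕ) (hN : 1 ≤ N) {k l : ℕ} (hkl : k < l) :
    bseq M N k ^ N < bseq M N l := by
  induction l with
  | zero => omega
  | succ l ih =>
    rcases Nat.lt_succ_iff_lt_or_eq.mp hkl with h | h
    · have h2 := ih h
      have h3 : bseq M N l ≤ bseq M N l ^ N := Nat.le_self_pow (by omega) _
      simp only [bseq]; omega
    · subst h; simp only [bseq]; omega

/-- The block of indices for trial `k`: powers `b^1, …, b^N` of the base. -/
def blockS (M N k : ℕ) : Finset ℕ :=
  (Finset.Icc 1 N).image (fun m => bseq M N k ^ m)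

lemma mem_blockS {M N k n : ℕ} :
    n ∈ blockS M N k ↔ ∃ m, 1 ≤ m ∧ m ≤ N ∧ n = bseq M N k ^ m := by
  simp [blockS, Finset.mem_image, Finset.mem_Icc, eq_comm, and_assoc]

lemma blockS_card (M N : ℕ) (hN : 1 ≤ N) (k : ℕ) : (blockS M N k).card = N := by
  rw [blockS, Finset.card_image_of_injective _
    (Nat.pow_right_injective (two_le_bseq M N hN k))]
  simp

lemma blockS_disjoint (M N : ℕ) (hN : 1 ≤ N) {k l : ℕ} (hkl : k ≠ l) :
    Disjoint (blockS M N k) (blockS M N l) := by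
  wlog h : k < l generalizing k l
  · exact (this hkl.symm (by omega)).symm
  rw [Finset.disjoint_left]
  rintro n hk hl
  obtain ⟨m, hm1, hmN, rfl⟩ := mem_blockS.mp hk
  obtain ⟨m', hm1', hmN', he⟩ := mem_blockS.mp hl
  have h1 : bseq M N k ^ m ≤ bseq M N k ^ N :=
    Nat.pow_le_pow_right (by have := two_le_bseq M N hN k; omega) hmN
  have h2 : bseq M N l ≤ bseq M N l ^ m' := Nat.le_self_pow (by omega) _
  have h3 := bseq_pow_lt M N hN h
  omega

lemma sum_two_pow (L : ℕ) : ∑ j ∈ Finset.range L, 2 ^ j = 2 ^ L - 1 := by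
  induction L with
  | zero => simp
  | succ L ih =>
    rw [Finset.sum_range_succ, ih, pow_succ]
    have : 1 ≤ 2 ^ L := Nat.one_le_two_pow
    omega

section Main

variable {Ω : Type*} [MeasurableSpace Ω] (μ : Measure Ω) [IsProbabilityMeasure μ]
  (p : ℝ) (ε : ℕ → Ω → Bool)

lemma meas_all_true (hp : p ∈ Set.Ioo (0 : ℝ) 1)
    (hmeas : ∀ n, Measurable (ε n))
    (hindep : iIndepFun ε μ)
    (hbern : ∀ n, μ {ω | ε n ω = true} = ENNReal.ofReal p)
    (S : Finset ℕ) :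
    μ {ω | ∀ n ∈ S, ε n ω = true} = ENNReal.ofReal p ^ S.card := by
  have h := (iIndepFun_iff_measure_inter_preimage_eq_mul.mp hindep) S
    (sets := fun _ => ({true} : Set Bool)) (fun i _ => trivial)
  have hset : {ω | ∀ n ∈ S, ε n ω = true} = ⋂ n ∈ S, ε n ⁻¹' {true} := by
    ext ω; simp
  have hpre : ∀ n : ℕ, ε n ⁻¹' {true} = {ω | ε n ω = true} := by
    intro n; ext ω; simp
  rw [hset, h]
  calc ∏ i ∈ S, μ (ε i ⁻¹' {true}) = ∏ i ∈ S, ENNReal.ofReal p := by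
        exact Finset.prod_congr rfl fun i _ => by rw [hpre, hbern]
    _ = ENNReal.ofReal p ^ S.card := Finset.prod_const _

lemma exists_block (hp : p ∈ Set.Ioo (0 : ℝ) 1)
    (hmeas : ∀ n, Measurable (ε n))
    (hindep : iIndepFun ε μ)
    (hbern : ∀ n, μ {ω | ε n ω = true} = ENNReal.ofReal p)
    (M N : ℕ) (hN : 1 ≤ N) :
    ∀ᵐ ω ∂μ, ∃ k, ∀ n ∈ blockS M N k, ε n ω = true := by
  set E : ℕ → Set Ω := fun k => {ω | ∀ n ∈ blockS M N k, ε n ω = true} with hE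
  have hEset : ∀ k, E k = ⋂ n ∈ blockS M N k, ε n ⁻¹' {true} := by
    intro k; ext ω; simp [hE]
  have hEmeas : ∀ k, MeasurableSet (E k) := by
    intro k
    rw [hEset]
    exact MeasurableSet.biInter (Set.to_countable _)
      (fun n _ => (hmeas n) trivial)
  have hEmu : ∀ k, μ (E k) = ENNReal.ofReal p ^ N := by
    intro k
    rw [hE]
    rw [meas_all_true μ p ε hp hmeas hindep hbern, blockS_card M N hN]
  have hInd : iIndepSet E μ := by
    rw [iIndepSet_iff_meas_biInter hEmeas]
    intro t
    have hU : ⋂ k ∈ t, E k = {ω | ∀ n ∈ t.biUnion (blockS M N), ε n ω = true} := by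
      ext ω; simp [hE, Finset.mem_biUnion]; tauto
    rw [hU, meas_all_true μ p ε hp hmeas hindep hbern]
    rw [Finset.card_biUnion (fun k _ l _ hkl => blockS_disjoint M N hN hkl)]
    have : ∀ k ∈ t, (blockS M N k).card = N := fun k _ => blockS_card M N hN k
    rw [Finset.sum_congr rfl this, Finset.sum_const, smul_eq_mul, pow_mul']
    rw [Finset.prod_congr rfl (fun k _ => hEmu k), Finset.prod_const]
  have hsum : (∑' k, μ (E k)) = ⊤ := by
    have hne : ENNReal.ofReal p ^ N ≠ 0 :=
      pow_ne_zero _ (by simp [ENNReal.ofReal_eq_zero]; exact hp.1)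
    rw [tsum_congr hEmu]
    exact ENNReal.tsum_const_eq_top_of_ne_zero hne
  have hone := measure_limsup_eq_one hEmeas hInd hsum
  have hmls : MeasurableSet (Filter.limsup E Filter.atTop) := by
    rw [Filter.limsup_eq_iInf_iSup_of_nat]
    exact MeasurableSet.iInter fun n =>
      MeasurableSet.iUnion fun k => MeasurableSet.iUnion fun _ => hEmeas k
  have hae : ∀ᵐ ω ∂μ, ω ∈ Filter.limsup E Filter.atTop := by
    rw [MeasureTheory.ae_iff]
    have : {ω | ω ∉ Filter.limsup E Filter.atTop} = (Filter.limsup E Filter.atTop)ᶜ := rfl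
    rw [this, prob_compl_eq_zero_iff hmls]
    exact hone
  filter_upwards [hae] with ω hω
  have := Filter.mem_limsup_iff_frequently_mem.mp hω
  obtain ⟨k, _, hk⟩ := Filter.frequently_atTop.mp this 0
  exact ⟨k, hk⟩

end Main

/-- For a Bernoulli(`p`) random subset `A(ω) = {n | ε n ω = true}` of `ℕ`, almost surely,
for every bound `M` and every `L ≥ 1` there are `x₁ < ⋯ < x_L` with
`FP(x₁,…,x_L) ⊆ A(ω)` and all elements of `FP(x₁,…,x_L)` greater than `M`. -/
theorem FP_with_large_elements {Ω : Type*} [MeasurableSpace Ω]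
    (μ : Measure Ω) [IsProbabilityMeasure μ]
    (p : ℝ) (hp : p ∈ Set.Ioo (0 : ℝ) 1)
    (ε : ℕ → Ω → Bool) (hmeas : ∀ n, Measurable (ε n))
    (hindep : iIndepFun ε μ)
    (hbern : ∀ n, μ {ω | ε n ω = true} = ENNReal.ofReal p) :
    ∀ᵐ ω ∂μ, ∀ M : ℕ, 0 < M → ∀ L : ℕ, 1 ≤ L →
      ∃ x : Fin L → ℕ, StrictMono x ∧ FP x ⊆ {n | ε n ω = true} ∧
        ∀ s ∈ FP x, M < s := by
  have key : ∀ᵐ ω ∂μ, ∀ M L : ℕ,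
      ∃ k, ∀ n ∈ blockS M (2 ^ L) k, ε n ω = true := by
    rw [MeasureTheory.ae_all_iff]
    intro M
    rw [MeasureTheory.ae_all_iff]
    intro L
    exact exists_block μ p ε hp hmeas hindep hbern M (2 ^ L) Nat.one_le_two_pow
  filter_upwards [key] with ω hω M hM L hL
  obtain ⟨k, hk⟩ := hω M L
  set N := 2 ^ L with hNdef
  set b := bseq M N k with hbdef
  have hb2 : 2 ≤ b := two_le_bseq M N Nat.one_le_two_pow k
  have hbM : M + 2 ≤ b := le_bseq M N Nat.one_le_two_pow k
  refine ⟨fun i => b ^ (2 ^ (i : ℕ)), ?_, ?_, ?_⟩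
  · intro i j hij
    exact Nat.pow_lt_pow_right (by omega) (Nat.pow_lt_pow_right one_lt_two hij)
  all_goals {
    intro s hs
    obtain ⟨F, hFne, rfl⟩ := hs
    rw [Finset.prod_pow_eq_pow_sum]
    set m := ∑ i ∈ F, 2 ^ (i : ℕ) with hm
    have hm1 : 1 ≤ m := by
      obtain ⟨i0, hi0⟩ := hFne
      calc 1 ≤ 2 ^ (i0 : ℕ) := Nat.one_le_two_pow
        _ ≤ m := Finset.single_le_sum (f := fun i : Fin L => 2 ^ (i : ℕ)) (fun i _ => Nat.zero_le _) hi0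
    have hmN : m ≤ N := by
      have h1 : m ≤ ∑ i : Fin L, 2 ^ (i : ℕ) :=
        Finset.sum_le_sum_of_subset (Finset.subset_univ F)
      have h2 : ∑ i : Fin L, 2 ^ (i : ℕ) = 2 ^ L - 1 := by
        rw [Fin.sum_univ_eq_sum_range (fun j => 2 ^ j) L, sum_two_pow]
      have : 1 ≤ 2 ^ L := Nat.one_le_two_pow
      omega
    first
    | exact hk _ (mem_blockS.mpr ⟨m, hm1, hmN, rfl⟩)
    | {
      have : b ≤ b ^ m := Nat.le_self_pow (by omega) _
      omega
    }
  }
end
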